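/- arXiv:2103.06000 — 7 statements merged into one kernel-verified Lean document; each statement's English description precedes it below -/
import Mathlib

section
/- For every t ∈ ℂ, every dimension d ≥ 1, every function c : ℕ^d × ℕ^d → ℂ and all multi-indices α, β ∈ ℕ^d one has T_{0,-t}(T_{0,t} c)(α,β) = c(α,β). Consequently the binomial operator T_{0,t} is a bijection on the space of all complex sequences on ℕ^d × ℕ^d, with inverse T_{0,-t}. -/
open Finset

noncomputable section

/-- Size of a multi-index: `|α| = α₁ + ⋯ + α_d`. -/
def msize {d : ℕ} (α : Fin d → ℕ) : ℕ := ∑ i, α i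

/-- Factorial of a multi-index: `α! = ∏ᵢ αᵢ!`. -/
def mfact {d : ℕ} (α : Fin d → ℕ) : ℕ := ∏ i, Nat.factorial (α i)

/-- Binomial coefficient of multi-indices: `C(α,γ) = ∏ᵢ choose(αᵢ,γᵢ)`. -/
def mchoose {d : ℕ} (α γ : Fin d → ℕ) : ℕ := ∏ i, Nat.choose (α i) (γ i)

/-- The binomial operator
`(T_{0,t} c)(α,β) = Σ_{γ ≤ α, γ ≤ β} (C(α,γ) C(β,γ))^{1/2} t^{|γ|} c(α−γ, β−γ)`. -/
def T0 {d : ℕ} (t : ℂ) (c : ((Fin d → ℕ) × (Fin d → ℕ)) → ℂ) :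
    ((Fin d → ℕ) × (Fin d → ℕ)) → ℂ := fun p =>
  ∑ γ ∈ Finset.Iic p.1 ∩ Finset.Iic p.2,
    ((Real.sqrt ((mchoose p.1 γ * mchoose p.2 γ : ℕ)) : ℝ) : ℂ) * t ^ (msize γ) *
      c (p.1 - γ, p.2 - γ)

lemma Iic_inter_Iic' {d : ℕ} (α β : Fin d → ℕ) :
    Finset.Iic α ∩ Finset.Iic β = Finset.Iic (α ⊓ β) := by
  ext x; simp [le_inf_iff]

/-- Trinomial revision for multi-indices. -/
lemma mchoose_trinomial {d : ℕ} (α γ δ : Fin d → ℕ) (h : γ + δ ≤ α) :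
    mchoose α γ * mchoose (α - γ) δ = mchoose α (γ + δ) * mchoose (γ + δ) γ := by
  unfold mchoose
  rw [← Finset.prod_mul_distrib, ← Finset.prod_mul_distrib]
  refine Finset.prod_congr rfl fun i _ => ?_
  have hi : γ i + δ i ≤ α i := h i
  have := Nat.choose_mul (n := α i) (k := γ i + δ i) (s := γ i) (Nat.le_add_right _ _)
  simp only [Pi.add_apply, Pi.sub_apply]
  rw [this, Nat.add_sub_cancel_left]

lemma inner_sum_eq {d : ℕ} (t : ℂ) (σ : Fin d → ℕ) :
    ∑ γ ∈ Finset.Iic σ, (mchoose σ γ : ℂ) * (-t) ^ (msize γ) * t ^ (msize (σ - γ))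
      = if σ = 0 then 1 else 0 := by
  have hIic : Finset.Iic σ = Fintype.piFinset fun i => Finset.Iic (σ i) := by
    ext x; simp [Fintype.mem_piFinset, Pi.le_def]
  have hprod : ∑ γ ∈ Finset.Iic σ, (mchoose σ γ : ℂ) * (-t) ^ (msize γ) * t ^ (msize (σ - γ))
      = ∏ i, ∑ g ∈ Finset.Iic (σ i), ((σ i).choose g : ℂ) * (-t) ^ g * t ^ (σ i - g) := by
    rw [Finset.prod_univ_sum, hIic]
    refine Finset.sum_congr rfl fun γ _ => ?_
    simp only [mchoose, msize, Pi.sub_apply]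
    push_cast
    rw [Finset.prod_mul_distrib, Finset.prod_mul_distrib, Finset.prod_pow_eq_pow_sum,
      Finset.prod_pow_eq_pow_sum]
  rw [hprod]
  have key : ∀ n : ℕ, ∑ g ∈ Finset.Iic n, ((n).choose g : ℂ) * (-t) ^ g * t ^ (n - g)
      = (0 : ℂ) ^ n := by
    intro n
    rw [show Finset.Iic n = Finset.range (n + 1) from by ext x; simp [Nat.lt_succ_iff]]
    have h := add_pow (-t) t n
    rw [neg_add_cancel] at h
    rw [h]
    exact Finset.sum_congr rfl fun g _ => by ring
  simp only [key]
  by_cases hσ : σ = 0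
  · simp [hσ]
  · rw [if_neg hσ]
    obtain ⟨i, hi⟩ : ∃ i, σ i ≠ 0 := by
      by_contra h; push_neg at h; exact hσ (funext h)
    exact Finset.prod_eq_zero (Finset.mem_univ i) (by simp [zero_pow hi])

lemma sqrt_coeff {d : ℕ} (α β γ δ : Fin d → ℕ)
    (hδα : γ + δ ≤ α) (hδβ : γ + δ ≤ β) :
    (Real.sqrt ((mchoose α γ : ℝ) * mchoose β γ) *
        Real.sqrt ((mchoose (α - γ) δ : ℝ) * mchoose (β - γ) δ) : ℝ)
      = (mchoose (γ + δ) γ : ℝ) *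
        Real.sqrt ((mchoose α (γ + δ) : ℝ) * mchoose β (γ + δ)) := by
  rw [← Real.sqrt_mul (by positivity)]
  have hA' : (mchoose α γ * mchoose (α - γ) δ : ℝ)
      = mchoose α (γ + δ) * mchoose (γ + δ) γ := by
    exact_mod_cast mchoose_trinomial α γ δ hδα
  have hB' : (mchoose β γ * mchoose (β - γ) δ : ℝ)
      = mchoose β (γ + δ) * mchoose (γ + δ) γ := by
    exact_mod_cast mchoose_trinomial β γ δ hδβ
  have h1 : ((mchoose α γ : ℝ) * mchoose β γ * ((mchoose (α - γ) δ : ℝ) * mchoose (β - γ) δ))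
      = ((mchoose (γ + δ) γ : ℝ)) ^ 2 * ((mchoose α (γ + δ) : ℝ) * mchoose β (γ + δ)) := by
    linear_combination ((mchoose β γ : ℝ) * mchoose (β - γ) δ) * hA'
      + ((mchoose α (γ + δ) : ℝ) * mchoose (γ + δ) γ) * hB'
  rw [h1, Real.sqrt_mul (by positivity), Real.sqrt_sq (by positivity)]

/-- Reindexing a double sum over `γ ≤ μ`, `δ ≤ μ - γ` as a sum over `σ ≤ μ`, `γ ≤ σ`. -/
lemma sum_reindex {d : ℕ} {M : Type*} [AddCommMonoid M] (μ : Fin d → ℕ)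
    (G : (Fin d → ℕ) → (Fin d → ℕ) → M) :
    ∑ γ ∈ Finset.Iic μ, ∑ δ ∈ Finset.Iic (μ - γ), G γ δ
      = ∑ σ ∈ Finset.Iic μ, ∑ γ ∈ Finset.Iic σ, G γ (σ - γ) := by
  rw [Finset.sum_sigma', Finset.sum_sigma']
  refine Finset.sum_nbij' (i := fun x => ⟨x.1 + x.2, x.1⟩) (j := fun x => ⟨x.2, x.1 - x.2⟩)
    ?_ ?_ ?_ ?_ ?_
  · rintro ⟨γ, δ⟩ hx
    simp only [Finset.mem_sigma, Finset.mem_Iic] at hx ⊢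
    obtain ⟨h1, h2⟩ := hx
    constructor
    · intro i
      have := h2 i; have := h1 i
      simp only [Pi.add_apply, Pi.sub_apply] at *
      omega
    · exact fun i => by simp [Pi.add_apply]
  · rintro ⟨σ, γ⟩ hx
    simp only [Finset.mem_sigma, Finset.mem_Iic] at hx ⊢
    obtain ⟨h1, h2⟩ := hx
    refine ⟨le_trans h2 h1, fun i => ?_⟩
    have := h1 i; have := h2 i
    simp only [Pi.sub_apply] at *
    omega
  · rintro ⟨γ, δ⟩ hx
    simp only [Finset.mem_sigma, Finset.mem_Iic] at hx
    have : γ + δ - γ = δ := by simp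
    simp [this]
  · rintro ⟨σ, γ⟩ hx
    simp only [Finset.mem_sigma, Finset.mem_Iic] at hx
    have : γ + (σ - γ) = σ := add_tsub_cancel_of_le hx.2
    simp [this]
  · rintro ⟨γ, δ⟩ hx
    simp

/-- Key pointwise identity. -/
lemma T0_inv {d : ℕ} (t : ℂ) (c : ((Fin d → ℕ) × (Fin d → ℕ)) → ℂ) (α β : Fin d → ℕ) :
    T0 (-t) (T0 t c) (α, β) = c (α, β) := by
  simp only [T0]
  rw [Iic_inter_Iic']
  have step1 : ∀ γ ∈ Finset.Iic (α ⊓ β),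
      ((Real.sqrt ((mchoose α γ * mchoose β γ : ℕ)) : ℝ) : ℂ) * (-t) ^ (msize γ) *
        (∑ δ ∈ Finset.Iic (α - γ) ∩ Finset.Iic (β - γ),
          ((Real.sqrt ((mchoose (α - γ) δ * mchoose (β - γ) δ : ℕ)) : ℝ) : ℂ) * t ^ (msize δ) *
            c (α - γ - δ, β - γ - δ))
      = ∑ δ ∈ Finset.Iic ((α ⊓ β) - γ),
          ((mchoose (γ + δ) γ : ℝ) : ℂ) *
            ((Real.sqrt ((mchoose α (γ + δ) * mchoose β (γ + δ) : ℕ)) : ℝ) : ℂ) *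
            ((-t) ^ (msize γ) * t ^ (msize δ)) * c (α - (γ + δ), β - (γ + δ)) := by
    intro γ hγ
    rw [Finset.mem_Iic, le_inf_iff] at hγ
    obtain ⟨hγα, hγβ⟩ := hγ
    have hinf : Finset.Iic (α - γ) ∩ Finset.Iic (β - γ) = Finset.Iic ((α ⊓ β) - γ) := by
      rw [Iic_inter_Iic']
      congr 1
      funext i
      show min (α i - γ i) (β i - γ i) = min (α i) (β i) - γ i
      omega
    rw [hinf, Finset.mul_sum]
    refine Finset.sum_congr rfl fun δ hδ => ?_
    rw [Finset.mem_Iic] at hδ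
    have hδα : γ + δ ≤ α := by
      intro i
      show γ i + δ i ≤ α i
      have h1 : δ i ≤ min (α i) (β i) - γ i := hδ i
      have h2 : γ i ≤ α i := hγα i
      omega
    have hδβ : γ + δ ≤ β := by
      intro i
      show γ i + δ i ≤ β i
      have h1 : δ i ≤ min (α i) (β i) - γ i := hδ i
      have h2 : γ i ≤ β i := hγβ i
      omega
    have hc := sqrt_coeff α β γ δ hδα hδβ
    have harg : α - γ - δ = α - (γ + δ) := tsub_tsub α γ δ
    have harg' : β - γ - δ = β - (γ + δ) := tsub_tsub β γ δ
    rw [harg, harg']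
    have hc' : ((Real.sqrt ((mchoose α γ : ℝ) * mchoose β γ) : ℝ) : ℂ) *
        ((Real.sqrt ((mchoose (α - γ) δ : ℝ) * mchoose (β - γ) δ) : ℝ) : ℂ)
        = ((mchoose (γ + δ) γ : ℝ) : ℂ) *
          ((Real.sqrt ((mchoose α (γ + δ) : ℝ) * mchoose β (γ + δ)) : ℝ) : ℂ) := by
      rw [← Complex.ofReal_mul, ← Complex.ofReal_mul, hc]
    push_cast at hc' ⊢
    linear_combination ((-t) ^ (msize γ) * t ^ (msize δ) * c (α - (γ + δ), β - (γ + δ))) * hc'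
  rw [Finset.sum_congr rfl step1, sum_reindex]
  have step3 : ∀ σ ∈ Finset.Iic (α ⊓ β),
      (∑ γ ∈ Finset.Iic σ,
        ((mchoose (γ + (σ - γ)) γ : ℝ) : ℂ) *
          ((Real.sqrt ((mchoose α (γ + (σ - γ)) * mchoose β (γ + (σ - γ)) : ℕ)) : ℝ) : ℂ) *
          ((-t) ^ (msize γ) * t ^ (msize (σ - γ))) *
          c (α - (γ + (σ - γ)), β - (γ + (σ - γ))))
      = if σ = 0 then c (α, β) else 0 := by
    intro σ _
    have hsum : (∑ γ ∈ Finset.Iic σ,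
        ((mchoose (γ + (σ - γ)) γ : ℝ) : ℂ) *
          ((Real.sqrt ((mchoose α (γ + (σ - γ)) * mchoose β (γ + (σ - γ)) : ℕ)) : ℝ) : ℂ) *
          ((-t) ^ (msize γ) * t ^ (msize (σ - γ))) *
          c (α - (γ + (σ - γ)), β - (γ + (σ - γ))))
        = (((Real.sqrt ((mchoose α σ * mchoose β σ : ℕ)) : ℝ) : ℂ) * c (α - σ, β - σ)) *
          ∑ γ ∈ Finset.Iic σ, (mchoose σ γ : ℂ) * (-t) ^ (msize γ) * t ^ (msize (σ - γ)) := by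
      rw [Finset.mul_sum]
      refine Finset.sum_congr rfl fun γ hγ => ?_
      rw [Finset.mem_Iic] at hγ
      have h1 : γ + (σ - γ) = σ := add_tsub_cancel_of_le hγ
      rw [h1]
      push_cast
      ring
    rw [hsum, inner_sum_eq]
    by_cases hσ : σ = 0
    · subst hσ
      simp [mchoose]
    · rw [if_neg hσ, if_neg hσ, mul_zero]
  rw [Finset.sum_congr rfl step3,
    Finset.sum_eq_single_of_mem (0 : Fin d → ℕ) (Finset.mem_Iic.mpr zero_le)
      (fun b _ hb => if_neg hb)]
  simp

/-- `T_{0,-t} ∘ T_{0,t} = id` pointwise; consequently `T_{0,t}` is a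
bijection on the space of all complex sequences on `ℕ^d × ℕ^d`, with inverse `T_{0,-t}`. -/
theorem stmt_0 (t : ℂ) (d : ℕ) (hd : 1 ≤ d) :
    (∀ (c : ((Fin d → ℕ) × (Fin d → ℕ)) → ℂ) (α β : Fin d → ℕ),
        T0 (-t) (T0 t c) (α, β) = c (α, β)) ∧
      Function.Bijective (T0 (d := d) t) ∧
      Function.LeftInverse (T0 (d := d) (-t)) (T0 (d := d) t) ∧
      Function.RightInverse (T0 (d := d) (-t)) (T0 (d := d) t) := by
  have key : ∀ (s : ℂ) (c : ((Fin d → ℕ) × (Fin d → ℕ)) → ℂ) (α β : Fin d → ℕ),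
      T0 (-s) (T0 s c) (α, β) = c (α, β) := fun s => T0_inv s
  have hleft : Function.LeftInverse (T0 (d := d) (-t)) (T0 (d := d) t) := by
    intro c; funext p; exact key t c p.1 p.2
  have hright : Function.RightInverse (T0 (d := d) (-t)) (T0 (d := d) t) := by
    intro c; funext p
    have := key (-t) c p.1 p.2
    rwa [neg_neg] at this
  exact ⟨fun c => key t c, ⟨hleft.injective, hright.surjective⟩, hleft, hright⟩

end
end

section
/- Let S₀ be the operator on sequences defined by (S₀ c)(α,β) = i^{|α|+|β|} c(α,β), where i is the imaginary unit. Then for every t ∈ ℂ, every c : ℕ^d × ℕ^d → ℂ and all α, β ∈ ℕ^d one has (T_{0,-t} c)(α,β) = i^{−(|α|+|β|)} · (T_{0,t}(S₀ c))(α,β); that is, T_{0,-t} = S₀^{-1} ∘ T_{0,t} ∘ S₀. -/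
open Finset

noncomputable section

/-- The operator `(S₀ c)(α,β) = i^{|α|+|β|} c(α,β)`. -/
def S0 {d : ℕ} (c : ((Fin d → ℕ) × (Fin d → ℕ)) → ℂ) :
    ((Fin d → ℕ) × (Fin d → ℕ)) → ℂ := fun p =>
  Complex.I ^ (msize p.1 + msize p.2) * c p

lemma msize_sub_add {d : ℕ} {α γ : Fin d → ℕ} (h : γ ≤ α) :
    msize (α - γ) + msize γ = msize α := by
  unfold msize
  rw [← Finset.sum_add_distrib]
  exact Finset.sum_congr rfl fun i _ => Nat.sub_add_cancel (h i)

/-- `T_{0,-t} = S₀^{-1} ∘ T_{0,t} ∘ S₀`, i.e.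
`(T_{0,-t} c)(α,β) = i^{−(|α|+|β|)} (T_{0,t}(S₀ c))(α,β)`. -/
theorem stmt_1 (t : ℂ) (d : ℕ) (hd : 1 ≤ d)
    (c : ((Fin d → ℕ) × (Fin d → ℕ)) → ℂ) (α β : Fin d → ℕ) :
    T0 (-t) c (α, β) =
      (Complex.I ^ (msize α + msize β))⁻¹ * T0 t (S0 c) (α, β) := by
  unfold T0 S0
  rw [Finset.mul_sum]
  apply Finset.sum_congr rfl
  intro γ hγ
  simp only [Finset.mem_inter, Finset.mem_Iic] at hγ
  obtain ⟨h1, h2⟩ := hγ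
  have hI : Complex.I ^ (msize α + msize β)
      = Complex.I ^ (msize (α - γ) + msize (β - γ)) * (-1 : ℂ) ^ (msize γ) := by
    rw [← msize_sub_add h1, ← msize_sub_add h2]
    have : msize (α - γ) + msize γ + (msize (β - γ) + msize γ)
        = (msize (α - γ) + msize (β - γ)) + 2 * msize γ := by ring
    rw [this, pow_add, pow_mul, Complex.I_sq]
  rw [hI]
  have hne : Complex.I ^ (msize (α - γ) + msize (β - γ)) ≠ 0 :=
    pow_ne_zero _ Complex.I_ne_zero
  have hne2 : ((-1 : ℂ)) ^ (msize γ) ≠ 0 := pow_ne_zero _ (by norm_num)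
  field_simp
  have h3 : ((-1:ℂ))^(msize γ) * (-1)^(msize γ) = 1 := by
    rw [← pow_add, ← two_mul, pow_mul]; norm_num
  rw [neg_pow]
  linear_combination (((Real.sqrt ((mchoose α γ * mchoose β γ : ℕ) : ℝ)) : ℂ) *
    t ^ msize γ * c (α - γ, β - γ)) * h3

end
end

section
/- Let t ∈ ℂ, d ≥ 1 and c : ℕ^d × ℕ^d → ℂ. Assume that for every ρ > 0 there exist r > 0 and C > 0 such that |c(α,β)| ≤ C · exp(−ρ|α| + r|β|) for all α, β ∈ ℕ^d. Then T_{0,t} c satisfies the same property: for every ρ > 0 there exist r > 0 and C > 0 such that |(T_{0,t} c)(α,β)| ≤ C · exp(−ρ|α| + r|β|) for all α, β. (This expresses that T_{0,t} maps the space ℓ_{𝓑,0,1/2}(ℕ^{2d}) into itself; quantitatively, if |c(α,β)| ≤ C e^{−r₁|α| + r₂|β|} with r₂ ≥ r₁ > 0, then |(T_{0,t} c)(α,β)| ≤ C e^{−(r₁−r₀)|α| + (r₂+r₀)|β|} with r₀ = (1/2) log(1+|t|).) -/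
open Finset

noncomputable section

lemma aux1 (n : ℕ) (x : ℝ) : ∑ k ∈ Finset.Iic n, (n.choose k : ℝ) * x ^ k = (1+x)^n := by
  have h : Finset.Iic n = Finset.range (n+1) := by ext k; simp [Nat.lt_succ_iff]
  rw [h, add_comm (1:ℝ) x, add_pow]
  simp [mul_comm]

lemma sum_mchoose {d : ℕ} (α : Fin d → ℕ) (x : ℝ) :
    ∑ γ ∈ Finset.Iic α, (mchoose α γ : ℝ) * x ^ msize γ = (1+x)^(msize α) := by
  have h : Finset.Iic α = Fintype.piFinset fun i => Finset.Iic (α i) := rfl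
  rw [h]
  have : ∀ γ : Fin d → ℕ, (mchoose α γ : ℝ) * x ^ msize γ
      = ∏ i, ((α i).choose (γ i) : ℝ) * x ^ (γ i) := by
    intro γ
    rw [mchoose, msize, Nat.cast_prod, ← Finset.prod_pow_eq_pow_sum, ← Finset.prod_mul_distrib]
  simp_rw [this]
  have hps := Finset.prod_univ_sum (κ := fun _ : Fin d => ℕ)
    (fun i => Finset.Iic (α i)) (fun i k => ((α i).choose k : ℝ) * x ^ k)
  rw [← hps]
  simp_rw [aux1]
  rw [msize, Finset.prod_pow_eq_pow_sum]

lemma msize_sub {d : ℕ} {α γ : Fin d → ℕ} (h : γ ≤ α) :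
    (msize (α - γ) : ℝ) = msize α - msize γ := by
  simp only [msize, Pi.sub_apply, Nat.cast_sum]
  rw [← Finset.sum_sub_distrib]
  exact Finset.sum_congr rfl fun i _ => Nat.cast_sub (h i)

lemma key {d : ℕ} (t : ℂ) (c : ((Fin d → ℕ) × (Fin d → ℕ)) → ℂ)
    (r₁ r₂ C : ℝ) (h12 : r₁ ≤ r₂) (hC : 0 ≤ C)
    (hc : ∀ α β : Fin d → ℕ, ‖c (α, β)‖ ≤
      C * Real.exp (-r₁ * (msize α : ℝ) + r₂ * (msize β : ℝ)))
    (α β : Fin d → ℕ) :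
    ‖T0 t c (α, β)‖ ≤
      C * Real.exp (-(r₁ - (1/2) * Real.log (1 + ‖t‖)) * (msize α : ℝ) +
        (r₂ + (1/2) * Real.log (1 + ‖t‖)) * (msize β : ℝ)) := by
  set x : ℝ := ‖t‖ with hxdef
  have hx : 0 ≤ x := norm_nonneg t
  have hx1 : (0:ℝ) < 1 + x := by linarith
  set r₀ : ℝ := (1/2) * Real.log (1 + x) with hr₀
  set S : Finset (Fin d → ℕ) := Finset.Iic α ∩ Finset.Iic β with hS
  set E : ℝ := Real.exp (-r₁ * (msize α : ℝ) + r₂ * (msize β : ℝ)) with hE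
  -- step 1: triangle inequality + termwise bound
  have step1 : ‖T0 t c (α, β)‖ ≤
      (C * E) * ∑ γ ∈ S, Real.sqrt ((mchoose α γ * mchoose β γ : ℕ)) * x ^ msize γ := by
    rw [T0]
    refine le_trans (norm_sum_le _ _) ?_
    rw [Finset.mul_sum]
    refine Finset.sum_le_sum fun γ hγ => ?_
    have hγα : γ ≤ α := (Finset.mem_Iic.mp (Finset.mem_of_mem_inter_left hγ))
    have hγβ : γ ≤ β := (Finset.mem_Iic.mp (Finset.mem_of_mem_inter_right hγ))
    rw [norm_mul, norm_mul, Complex.norm_real, norm_pow, Real.norm_of_nonneg (Real.sqrt_nonneg _)]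
    have hb := hc (α - γ) (β - γ)
    rw [msize_sub hγα, msize_sub hγβ] at hb
    have hexp : C * Real.exp (-r₁ * ((msize α : ℝ) - msize γ) + r₂ * ((msize β : ℝ) - msize γ))
        ≤ C * E := by
      refine mul_le_mul_of_nonneg_left ?_ hC
      rw [hE]
      apply Real.exp_le_exp.mpr
      have : (0:ℝ) ≤ (msize γ : ℝ) := Nat.cast_nonneg _
      nlinarith
    calc Real.sqrt ((mchoose α γ * mchoose β γ : ℕ)) * x ^ msize γ
          * ‖c (α - γ, β - γ)‖
        ≤ Real.sqrt ((mchoose α γ * mchoose β γ : ℕ)) * x ^ msize γ * (C * E) := by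
          refine mul_le_mul_of_nonneg_left (le_trans hb hexp) ?_
          positivity
      _ = C * E * (Real.sqrt ((mchoose α γ * mchoose β γ : ℕ)) * x ^ msize γ) := by ring
  -- step 2: Cauchy–Schwarz
  have hsum : ∀ μ : Fin d → ℕ, S ⊆ Finset.Iic μ →
      ∑ γ ∈ S, (mchoose μ γ : ℝ) * x ^ msize γ ≤ (1+x) ^ msize μ := by
    intro μ hsub
    rw [← sum_mchoose μ x]
    exact Finset.sum_le_sum_of_subset_of_nonneg hsub (fun γ _ _ => by positivity)
  have cs : (∑ γ ∈ S, Real.sqrt ((mchoose α γ * mchoose β γ : ℕ)) * x ^ msize γ) ^ 2 ≤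
      ((1+x) ^ msize α) * ((1+x) ^ msize β) := by
    refine le_trans (Finset.sum_sq_le_sum_mul_sum_of_sq_eq_mul S
      (f := fun γ => (mchoose α γ : ℝ) * x ^ msize γ)
      (g := fun γ => (mchoose β γ : ℝ) * x ^ msize γ)
      (fun γ _ => by positivity) (fun γ _ => by positivity) (fun γ _ => ?_)) ?_
    · rw [mul_pow, Real.sq_sqrt (by positivity)]
      push_cast
      ring
    · exact mul_le_mul (hsum α Finset.inter_subset_left)
        (hsum β Finset.inter_subset_right)
        (Finset.sum_nonneg fun γ _ => by positivity) (by positivity)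
  have hS0nonneg : 0 ≤ ∑ γ ∈ S, Real.sqrt ((mchoose α γ * mchoose β γ : ℕ)) * x ^ msize γ :=
    Finset.sum_nonneg fun γ _ => by positivity
  have hsqrtpow : ∀ n : ℕ, Real.sqrt ((1+x) ^ n) = Real.exp (r₀ * n) := by
    intro n
    have h1 : Real.exp r₀ = Real.sqrt (1+x) := by
      rw [hr₀, one_div, inv_mul_eq_div, Real.exp_half, Real.exp_log hx1]
    rw [mul_comm r₀, Real.exp_nat_mul, h1]
    induction n with
    | zero => simp
    | succ k ih => rw [pow_succ, pow_succ, Real.sqrt_mul (by positivity), ih]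
  have step2 : ∑ γ ∈ S, Real.sqrt ((mchoose α γ * mchoose β γ : ℕ)) * x ^ msize γ ≤
      Real.exp (r₀ * msize α) * Real.exp (r₀ * msize β) := by
    rw [← hsqrtpow, ← hsqrtpow, ← Real.sqrt_mul (by positivity)]
    exact (Real.le_sqrt hS0nonneg (by positivity)).mpr cs
  calc ‖T0 t c (α, β)‖ ≤
      (C * E) * ∑ γ ∈ S, Real.sqrt ((mchoose α γ * mchoose β γ : ℕ)) * x ^ msize γ := step1
    _ ≤ (C * E) * (Real.exp (r₀ * msize α) * Real.exp (r₀ * msize β)) := by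
        refine mul_le_mul_of_nonneg_left step2 ?_
        have := Real.exp_pos (-r₁ * (msize α : ℝ) + r₂ * (msize β : ℝ))
        positivity
    _ = C * Real.exp (-(r₁ - r₀) * (msize α : ℝ) + (r₂ + r₀) * (msize β : ℝ)) := by
        rw [hE, ← Real.exp_add, mul_assoc, ← Real.exp_add]
        congr 1
        ring

/-- `T_{0,t}` maps `ℓ_{𝓑,0,1/2}(ℕ^{2d})` into itself; quantitatively,
if `|c(α,β)| ≤ C e^{−r₁|α| + r₂|β|}` with `r₂ ≥ r₁ > 0`, then
`|(T_{0,t} c)(α,β)| ≤ C e^{−(r₁−r₀)|α| + (r₂+r₀)|β|}` with `r₀ = (1/2) log(1+|t|)`. -/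
theorem stmt_6 (t : ℂ) (d : ℕ) (hd : 1 ≤ d)
    (c : ((Fin d → ℕ) × (Fin d → ℕ)) → ℂ) :
    ((∀ ρ > (0:ℝ), ∃ r > (0:ℝ), ∃ C > (0:ℝ), ∀ α β : Fin d → ℕ,
        ‖c (α, β)‖ ≤
          C * Real.exp (-ρ * (msize α : ℝ) + r * (msize β : ℝ))) →
      (∀ ρ > (0:ℝ), ∃ r > (0:ℝ), ∃ C > (0:ℝ), ∀ α β : Fin d → ℕ,
        ‖T0 t c (α, β)‖ ≤
          C * Real.exp (-ρ * (msize α : ℝ) + r * (msize β : ℝ)))) ∧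
    (∀ r₁ r₂ C : ℝ, 0 < r₁ → r₁ ≤ r₂ → 0 < C →
      (∀ α β : Fin d → ℕ,
        ‖c (α, β)‖ ≤
          C * Real.exp (-r₁ * (msize α : ℝ) + r₂ * (msize β : ℝ))) →
      (∀ α β : Fin d → ℕ,
        ‖T0 t c (α, β)‖ ≤
          C * Real.exp (-(r₁ - (1/2) * Real.log (1 + ‖t‖)) * (msize α : ℝ) +
            (r₂ + (1/2) * Real.log (1 + ‖t‖)) * (msize β : ℝ)))) := by
  have hr₀ : 0 ≤ (1/2) * Real.log (1 + ‖t‖) := by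
    have : (0:ℝ) ≤ Real.log (1 + ‖t‖) :=
      Real.log_nonneg (by have := norm_nonneg t; linarith)
    linarith
  set r₀ : ℝ := (1/2) * Real.log (1 + ‖t‖) with hr₀def
  constructor
  · intro h ρ hρ
    obtain ⟨r, hr, C, hC, hb⟩ := h (ρ + r₀) (by linarith)
    refine ⟨max r (ρ + r₀) + r₀, by positivity, C, hC, fun α β => ?_⟩
    have hb' : ∀ α β : Fin d → ℕ, ‖c (α, β)‖ ≤
        C * Real.exp (-(ρ + r₀) * (msize α : ℝ) + max r (ρ + r₀) * (msize β : ℝ)) := by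
      intro α β
      refine le_trans (hb α β) (mul_le_mul_of_nonneg_left (Real.exp_le_exp.mpr ?_) hC.le)
      have h1 : r ≤ max r (ρ + r₀) := le_max_left _ _
      have h2 : (0:ℝ) ≤ (msize β : ℝ) := Nat.cast_nonneg _
      nlinarith
    have hk := key t c (ρ + r₀) (max r (ρ + r₀)) C (le_max_right _ _) hC.le hb' α β
    rw [hr₀def] at hk ⊢
    have heq : ρ + (1/2) * Real.log (1 + ‖t‖) -
        (1/2) * Real.log (1 + ‖t‖) = ρ := by ring
    rwa [heq] at hk
  · intro r₁ r₂ C hr₁ h12 hC hc α β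
    exact key t c r₁ r₂ C h12 hC.le hc α β

end
end

section
/- Let d ≥ 1, p ∈ (1,∞), t ∈ ℂ with |t| ≤ 1, 0 < r₁ < 1 and r₂ > r₁/(1−r₁). Then there is a constant C > 0 such that for every b : ℕ^d × ℕ^d → ℂ with Σ_{α,β} |b(α,β)|^p r₁^{−p(|α|+|β|)/2} < ∞, the series (T*_{0,t} b)(α,β) = Σ_{γ ∈ ℕ^d} (C(α+γ,γ) C(β+γ,γ))^{1/2} t^{|γ|} b(α+γ, β+γ) converges absolutely for every (α,β), and Σ_{α,β} |(T*_{0,t} b)(α,β)|^p · r₂^{−p(|α|+|β|)/2} ≤ C^p · Σ_{α,β} |b(α,β)|^p · r₁^{−p(|α|+|β|)/2}. That is, T*_{0,t} extends to a continuous map from ℓ^p_{r₁}(ℕ^{2d}) to ℓ^p_{r₂}(ℕ^{2d}). -/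
open Finset

noncomputable section

/-- The `ℓ^p_r` "norm-power" sum `Σ_{α,β} |b(α,β)|^p r^{−p(|α|+|β|)/2}`, valued in `ℝ≥0∞`. -/
def lpSum {d : ℕ} (p r : ℝ) (b : ((Fin d → ℕ) × (Fin d → ℕ)) → ℂ) : ENNReal :=
  ∑' q : (Fin d → ℕ) × (Fin d → ℕ),
    ENNReal.ofReal (‖b q‖ ^ p *
      r ^ (-(p * ((msize q.1 + msize q.2 : ℕ) : ℝ)) / 2))

/-- One term of the adjoint binomial operator
`(T*_{0,t} b)(α,β) = Σ_{γ} (C(α+γ,γ) C(β+γ,γ))^{1/2} t^{|γ|} b(α+γ, β+γ)`. -/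
def T0starTerm {d : ℕ} (t : ℂ) (b : ((Fin d → ℕ) × (Fin d → ℕ)) → ℂ)
    (p : (Fin d → ℕ) × (Fin d → ℕ)) (γ : Fin d → ℕ) : ℂ :=
  ((Real.sqrt ((mchoose (p.1 + γ) γ * mchoose (p.2 + γ) γ : ℕ)) : ℝ) : ℂ) *
    t ^ (msize γ) * b (p.1 + γ, p.2 + γ)

/-- The adjoint binomial operator `T*_{0,t}`, defined by the (absolutely convergent) series. -/
def T0star {d : ℕ} (t : ℂ) (b : ((Fin d → ℕ) × (Fin d → ℕ)) → ℂ) :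
    ((Fin d → ℕ) × (Fin d → ℕ)) → ℂ := fun p =>
  ∑' γ : Fin d → ℕ, T0starTerm t b p γ

lemma msize_add {d : ℕ} (α γ : Fin d → ℕ) : msize (α + γ) = msize α + msize γ := by
  simp [msize, Finset.sum_add_distrib]

lemma choose_mul_pow_le {x : ℝ} (hx : 0 ≤ x) (n k : ℕ) :
    (Nat.choose (n + k) k : ℝ) * x ^ k ≤ (1 + x) ^ (n + k) := by
  have h := add_pow x 1 (n + k)
  have hk : k ∈ Finset.range (n + k + 1) := by
    simp [Nat.lt_succ_iff]
  calc (Nat.choose (n + k) k : ℝ) * x ^ k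
      = x ^ k * 1 ^ (n + k - k) * (Nat.choose (n + k) k : ℝ) := by ring
    _ ≤ ∑ j ∈ Finset.range (n + k + 1), x ^ j * 1 ^ (n + k - j) * (Nat.choose (n + k) j : ℝ) := by
        apply Finset.single_le_sum (f := fun j => x ^ j * 1 ^ (n + k - j) * (Nat.choose (n + k) j : ℝ)) _ hk
        intro i _
        positivity
    _ = (x + 1) ^ (n + k) := (add_pow x 1 (n + k)).symm
    _ = (1 + x) ^ (n + k) := by ring

lemma mchoose_mul_pow_le {d : ℕ} {x : ℝ} (hx : 0 ≤ x) (α γ : Fin d → ℕ) :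
    (mchoose (α + γ) γ : ℝ) * x ^ msize γ ≤ (1 + x) ^ (msize α + msize γ) := by
  have : (mchoose (α + γ) γ : ℝ) * x ^ msize γ
      = ∏ i, ((Nat.choose (α i + γ i) (γ i) : ℝ) * x ^ γ i) := by
    rw [Finset.prod_mul_distrib]
    simp [mchoose, msize, ← Finset.prod_pow_eq_pow_sum]
  rw [this, ← msize_add]
  have : ((1:ℝ) + x) ^ (msize (α + γ)) = ∏ i, (1 + x) ^ ((α + γ) i) := by
    simp [msize, ← Finset.prod_pow_eq_pow_sum]
  rw [this]
  apply Finset.prod_le_prod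
  · intro i _; positivity
  · intro i _
    simpa using choose_mul_pow_le hx (α i) (γ i)

set_option maxHeartbeats 1000000 in
lemma summable_pow_msize {d : ℕ} {x : ℝ} (hx : 0 ≤ x) (hx1 : x < 1) :
    Summable (fun γ : Fin d → ℕ => x ^ msize γ) := by
  induction d with
  | zero =>
    have : (fun γ : Fin 0 → ℕ => x ^ msize γ) = fun _ => x ^ 0 := by
      funext γ; simp [msize]
    rw [this]
    exact summable_of_finite_support (Set.toFinite _)
  | succ n ih =>
    have hgeo : Summable (fun k : ℕ => x ^ k) := summable_geometric_of_lt_one hx hx1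
    have h2 : Summable (fun q : ℕ × (Fin n → ℕ) => x ^ q.1 * x ^ msize q.2) := by
      exact Summable.mul_of_nonneg (f := fun k : ℕ => x ^ k)
        (g := fun γ : Fin n → ℕ => x ^ msize γ) hgeo ih
        (fun k => pow_nonneg hx k) (fun γ => pow_nonneg hx _)
    have h3 : ∀ q : ℕ × (Fin n → ℕ), x ^ q.1 * x ^ msize q.2
        = x ^ msize (Fin.cons q.1 q.2 : Fin (n+1) → ℕ) := by
      intro q; rw [← pow_add]; congr 1
      simp [msize, Fin.sum_univ_succ]
    have h4 := h2.congr h3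
    exact ((Fin.consEquiv (fun _ : Fin (n+1) => ℕ)).summable_iff
      (f := fun γ : Fin (n+1) → ℕ => x ^ msize γ)).1 h4

lemma sqrt_pow' {x : ℝ} (hx : 0 ≤ x) (n : ℕ) :
    Real.sqrt (x ^ n) = Real.sqrt x ^ n := by
  induction n with
  | zero => simp
  | succ k ih => rw [pow_succ, pow_succ, Real.sqrt_mul (pow_nonneg hx k), ih]

lemma weight_eq {r : ℝ} (hr : 0 < r) (p : ℝ) (a : ℝ) (ha : 0 ≤ a) (N : ℕ) :
    a ^ p * r ^ (-(p * (N : ℝ)) / 2) = (a / Real.sqrt r ^ N) ^ p := by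
  rw [Real.div_rpow ha (pow_nonneg (Real.sqrt_nonneg r) N)]
  rw [← Real.rpow_natCast (Real.sqrt r) N, Real.sqrt_eq_rpow, ← Real.rpow_mul hr.le,
    ← Real.rpow_mul hr.le]
  have h1 : (-(p * (N : ℝ)) / 2) = -(1 / 2 * (N : ℝ) * p) := by ring
  rw [h1, Real.rpow_neg hr.le, ← div_eq_mul_inv]

lemma core_ineq {d : ℕ} {r₁ r₂ : ℝ} (hr₁ : 0 < r₁) (hr₂ : 0 < r₂) (α β γ : Fin d → ℕ) :
    ((mchoose (α + γ) γ * mchoose (β + γ) γ : ℕ) : ℝ)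
        * r₁ ^ (msize α + msize β + 2 * msize γ)
      ≤ ((1 + r₂) * r₁ / r₂) ^ (msize α + msize β + 2 * msize γ)
        * r₂ ^ (msize α + msize β) := by
  set N := msize α + msize β with hN
  set g := msize γ with hg
  set A := (1 + r₂) * r₁ / r₂ with hAdef
  have h1 := mchoose_mul_pow_le hr₂.le α γ
  have h2 := mchoose_mul_pow_le hr₂.le β γ
  have hA : A * r₂ = (1 + r₂) * r₁ := div_mul_cancel₀ _ hr₂.ne'
  have h3 : ((mchoose (α + γ) γ * mchoose (β + γ) γ : ℕ) : ℝ) * r₂ ^ (2 * g)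
      ≤ (1 + r₂) ^ (N + 2 * g) := by
    have hm := mul_le_mul h1 h2 (by positivity) (by positivity)
    calc ((mchoose (α + γ) γ * mchoose (β + γ) γ : ℕ) : ℝ) * r₂ ^ (2 * g)
        = ((mchoose (α + γ) γ : ℝ) * r₂ ^ g) * ((mchoose (β + γ) γ : ℝ) * r₂ ^ g) := by
          push_cast
          rw [two_mul, pow_add]
          ring
      _ ≤ (1 + r₂) ^ (msize α + g) * (1 + r₂) ^ (msize β + g) := hm
      _ = (1 + r₂) ^ (N + 2 * g) := by rw [← pow_add]; congr 1; omega
  rw [← mul_le_mul_iff_of_pos_right (pow_pos hr₂ (2 * g))]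
  calc ((mchoose (α + γ) γ * mchoose (β + γ) γ : ℕ) : ℝ) * r₁ ^ (N + 2 * g) * r₂ ^ (2 * g)
      = (((mchoose (α + γ) γ * mchoose (β + γ) γ : ℕ) : ℝ) * r₂ ^ (2 * g)) * r₁ ^ (N + 2 * g) := by
        ring
    _ ≤ (1 + r₂) ^ (N + 2 * g) * r₁ ^ (N + 2 * g) :=
        mul_le_mul_of_nonneg_right h3 (by positivity)
    _ = ((1 + r₂) * r₁) ^ (N + 2 * g) := (mul_pow _ _ _).symm
    _ = (A * r₂) ^ (N + 2 * g) := by rw [hA]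
    _ = A ^ (N + 2 * g) * r₂ ^ (N + 2 * g) := mul_pow _ _ _
    _ = A ^ (N + 2 * g) * r₂ ^ N * r₂ ^ (2 * g) := by rw [pow_add]; ring

lemma key_sqrt {d : ℕ} {r₁ r₂ : ℝ} (hr₁ : 0 < r₁) (hr₂ : 0 < r₂) (α β γ : Fin d → ℕ) :
    Real.sqrt ((mchoose (α + γ) γ * mchoose (β + γ) γ : ℕ))
        * Real.sqrt r₁ ^ (msize α + msize β + 2 * msize γ)
      ≤ Real.sqrt ((1 + r₂) * r₁ / r₂) ^ (msize α + msize β + 2 * msize γ)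
        * Real.sqrt r₂ ^ (msize α + msize β) := by
  have hA : (0:ℝ) ≤ (1 + r₂) * r₁ / r₂ := by positivity
  have h := Real.sqrt_le_sqrt (core_ineq hr₁ hr₂ α β γ)
  rwa [Real.sqrt_mul (by positivity) _, Real.sqrt_mul (by positivity) _,
    sqrt_pow' hr₁.le, sqrt_pow' hA, sqrt_pow' hr₂.le] at h

open MeasureTheory in
lemma holder_tsum {ι : Type*} [Countable ι] (w a : ι → ENNReal) {p : ℝ} (hp : 1 < p) :
    (∑' i, w i * a i) ^ p ≤ (∑' i, w i * a i ^ p) * (∑' i, w i) ^ (p - 1) := by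
  letI : MeasurableSpace ι := ⊤
  haveI : MeasurableSingletonClass ι := ⟨fun _ => trivial⟩
  set q := Real.conjExponent p with hq
  have hpq : p.HolderConjugate q := Real.HolderConjugate.conjExponent hp
  have hp0 : (0:ℝ) ≤ p := by linarith
  have hpne : p ≠ 0 := by linarith
  have hqne : q ≠ 0 := hpq.symm.ne_zero
  have hmeas : ∀ f : ι → ENNReal, Measurable f := fun f s _ => trivial
  have h := ENNReal.lintegral_mul_le_Lp_mul_Lq (Measure.count : Measure ι) hpq
    (f := fun i => w i ^ (1/p) * a i) (g := fun i => w i ^ (1/q))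
    (hmeas _).aemeasurable (hmeas _).aemeasurable
  rw [lintegral_count, lintegral_count, lintegral_count] at h
  have e1 : ∀ i : ι, ((fun i => w i ^ (1/p) * a i) * fun i => w i ^ (1/q)) i = w i * a i := by
    intro i
    simp only [Pi.mul_apply]
    rw [mul_right_comm, ← ENNReal.rpow_add_of_nonneg (1/p) (1/q) hpq.one_div_nonneg
      hpq.symm.one_div_nonneg]
    rw [one_div, one_div, hpq.inv_add_inv_eq_one, ENNReal.rpow_one]
  have e2 : ∀ i : ι, (w i ^ (1/p) * a i) ^ p = w i * a i ^ p := by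
    intro i
    rw [ENNReal.mul_rpow_of_nonneg _ _ hp0, ← ENNReal.rpow_mul,
      one_div_mul_cancel hpne, ENNReal.rpow_one]
  have e3 : ∀ i : ι, (w i ^ (1/q)) ^ q = w i := by
    intro i
    rw [← ENNReal.rpow_mul, one_div_mul_cancel hqne, ENNReal.rpow_one]
  simp only [e1] at h
  simp only [e2, e3] at h
  have h2 := ENNReal.rpow_le_rpow h hp0
  rw [ENNReal.mul_rpow_of_nonneg _ _ hp0, ← ENNReal.rpow_mul, ← ENNReal.rpow_mul,
    one_div_mul_cancel hpne, ENNReal.rpow_one] at h2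
  have : 1 / q * p = p - 1 := by
    rw [one_div, mul_comm, ← div_eq_mul_inv, hpq.div_conj_eq_sub_one]
  rwa [this] at h2

/-- `T*_{0,t}` extends to a continuous map from `ℓ^p_{r₁}(ℕ^{2d})` to
`ℓ^p_{r₂}(ℕ^{2d})` when `|t| ≤ 1`, `0 < r₁ < 1` and `r₂ > r₁/(1−r₁)`, the defining
series being absolutely convergent. -/
theorem stmt_8 (d : ℕ) (hd : 1 ≤ d) (p : ℝ) (hp : 1 < p) (t : ℂ)
    (ht : ‖t‖ ≤ 1) (r₁ r₂ : ℝ) (hr₁ : 0 < r₁) (hr₁' : r₁ < 1)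
    (hr₂ : r₁ / (1 - r₁) < r₂) :
    ∃ C > (0:ℝ), ∀ b : ((Fin d → ℕ) × (Fin d → ℕ)) → ℂ,
      lpSum p r₁ b < ⊤ →
      (∀ q : (Fin d → ℕ) × (Fin d → ℕ),
          Summable (fun γ : Fin d → ℕ => ‖T0starTerm t b q γ‖)) ∧
      lpSum p r₂ (T0star t b) ≤ ENNReal.ofReal (C ^ p) * lpSum p r₁ b := by
  have hp0 : (0:ℝ) < p := by linarith
  have h1r : (0:ℝ) < 1 - r₁ := by linarith
  have hr₂pos : 0 < r₂ := lt_trans (div_pos hr₁ h1r) hr₂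
  set A : ℝ := (1 + r₂) * r₁ / r₂ with hAdef
  have hA0 : 0 < A := by positivity
  have hA1 : A < 1 := by
    rw [hAdef, div_lt_one hr₂pos]
    have h := (div_lt_iff₀ h1r).1 hr₂
    nlinarith
  have hsA0 : 0 ≤ Real.sqrt A := Real.sqrt_nonneg A
  have hsA1 : Real.sqrt A ≤ 1 := Real.sqrt_le_one.2 hA1.le
  have hMsum : Summable (fun γ : Fin d → ℕ => A ^ msize γ) := summable_pow_msize hA0.le hA1
  set M : ℝ := ∑' γ : Fin d → ℕ, A ^ msize γ with hMdef
  have hM1 : 1 ≤ M := by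
    have h0 : A ^ msize (0 : Fin d → ℕ) ≤ M :=
      Summable.le_tsum hMsum 0 (fun γ _ => pow_nonneg hA0.le _)
    simpa [msize] using h0
  have hM0 : 0 < M := by linarith
  refine ⟨M, hM0, ?_⟩
  intro b hb
  -- the weighted coefficient function
  set g : ((Fin d → ℕ) × (Fin d → ℕ)) → ℝ :=
    fun q => ‖b q‖ / Real.sqrt r₁ ^ (msize q.1 + msize q.2) with hgdef
  have hgnonneg : ∀ q, 0 ≤ g q := fun q => by
    apply div_nonneg (norm_nonneg _) (pow_nonneg (Real.sqrt_nonneg _) _)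
  have hlp1 : lpSum p r₁ b = ∑' q : (Fin d → ℕ) × (Fin d → ℕ), ENNReal.ofReal (g q ^ p) := by
    refine tsum_congr fun q => ?_
    rw [weight_eq hr₁ p _ (norm_nonneg _) (msize q.1 + msize q.2)]
  -- uniform bound on g
  set Sr : ℝ := (lpSum p r₁ b).toReal with hSrdef
  have hgp_le : ∀ q, g q ^ p ≤ Sr := by
    intro q
    have h1 : ENNReal.ofReal (g q ^ p) ≤ lpSum p r₁ b := by
      rw [hlp1]; exact ENNReal.le_tsum q
    exact (ENNReal.ofReal_le_iff_le_toReal hb.ne).1 h1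
  set B : ℝ := Sr ^ (1/p) with hBdef
  have hSr0 : 0 ≤ Sr := ENNReal.toReal_nonneg
  have hB0 : 0 ≤ B := Real.rpow_nonneg hSr0 _
  have hgle : ∀ q, g q ≤ B := by
    intro q
    calc g q = (g q ^ p) ^ (1/p) := by
          rw [← Real.rpow_mul (hgnonneg q), mul_one_div, div_self hp0.ne', Real.rpow_one]
      _ ≤ Sr ^ (1/p) := Real.rpow_le_rpow (Real.rpow_nonneg (hgnonneg q) _) (hgp_le q)
          (by positivity)
  -- the key pointwise estimate
  have estE : ∀ (q : (Fin d → ℕ) × (Fin d → ℕ)) (γ : Fin d → ℕ),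
      ‖T0starTerm t b q γ‖
        ≤ (Real.sqrt A ^ (msize q.1 + msize q.2) * A ^ msize γ * g (q.1 + γ, q.2 + γ))
            * Real.sqrt r₂ ^ (msize q.1 + msize q.2) := by
    intro q γ
    set N := msize q.1 + msize q.2 with hN
    have habs : ‖T0starTerm t b q γ‖
        ≤ Real.sqrt ((mchoose (q.1 + γ) γ * mchoose (q.2 + γ) γ : ℕ))
            * ‖b (q.1 + γ, q.2 + γ)‖ := by
      rw [T0starTerm, norm_mul, norm_mul, Complex.norm_real, Real.norm_eq_abs,
        abs_of_nonneg (Real.sqrt_nonneg _), norm_pow]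
      have ht' : ‖t‖ ^ msize γ ≤ 1 :=
        pow_le_one₀ (norm_nonneg _) ht
      calc Real.sqrt ((mchoose (q.1 + γ) γ * mchoose (q.2 + γ) γ : ℕ)) * ‖t‖ ^ msize γ
              * ‖b (q.1 + γ, q.2 + γ)‖
          ≤ Real.sqrt ((mchoose (q.1 + γ) γ * mchoose (q.2 + γ) γ : ℕ)) * 1
              * ‖b (q.1 + γ, q.2 + γ)‖ := by
            apply mul_le_mul_of_nonneg_right _ (norm_nonneg _)
            exact mul_le_mul_of_nonneg_left ht' (Real.sqrt_nonneg _)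
        _ = Real.sqrt ((mchoose (q.1 + γ) γ * mchoose (q.2 + γ) γ : ℕ))
              * ‖b (q.1 + γ, q.2 + γ)‖ := by ring
    have hbg : ‖b (q.1 + γ, q.2 + γ)‖
        = g (q.1 + γ, q.2 + γ) * Real.sqrt r₁ ^ (N + 2 * msize γ) := by
      have hNγ : msize (q.1 + γ) + msize (q.2 + γ) = N + 2 * msize γ := by
        rw [msize_add, msize_add, hN]; ring
      rw [hgdef]
      simp only
      rw [hNγ, div_mul_cancel₀]
      exact (pow_pos (Real.sqrt_pos.2 hr₁) _).ne'
    calc ‖T0starTerm t b q γ‖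
        ≤ Real.sqrt ((mchoose (q.1 + γ) γ * mchoose (q.2 + γ) γ : ℕ))
            * (g (q.1 + γ, q.2 + γ) * Real.sqrt r₁ ^ (N + 2 * msize γ)) := by
          rw [← hbg]; exact habs
      _ = (Real.sqrt ((mchoose (q.1 + γ) γ * mchoose (q.2 + γ) γ : ℕ))
            * Real.sqrt r₁ ^ (N + 2 * msize γ)) * g (q.1 + γ, q.2 + γ) := by ring
      _ ≤ (Real.sqrt A ^ (N + 2 * msize γ) * Real.sqrt r₂ ^ N) * g (q.1 + γ, q.2 + γ) := by
          apply mul_le_mul_of_nonneg_right _ (hgnonneg _)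
          exact key_sqrt hr₁ hr₂pos q.1 q.2 γ
      _ = (Real.sqrt A ^ N * A ^ msize γ * g (q.1 + γ, q.2 + γ)) * Real.sqrt r₂ ^ N := by
          rw [pow_add, pow_mul, Real.sq_sqrt hA0.le]; ring
  -- Part 1 : absolute convergence
  have hsummable : ∀ q : (Fin d → ℕ) × (Fin d → ℕ),
      Summable (fun γ : Fin d → ℕ => ‖T0starTerm t b q γ‖) := by
    intro q
    set N := msize q.1 + msize q.2 with hN
    refine Summable.of_nonneg_of_le
      (f := fun γ : Fin d → ℕ => (Real.sqrt A ^ N * B * Real.sqrt r₂ ^ N) * A ^ msize γ)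
      (fun γ => norm_nonneg _) ?_ (hMsum.mul_left _)
    intro γ
    refine (estE q γ).trans ?_
    beta_reduce
    rw [← hN]
    rw [show (Real.sqrt A ^ N * B * Real.sqrt r₂ ^ N) * A ^ msize γ
        = (Real.sqrt A ^ N * A ^ msize γ * B) * Real.sqrt r₂ ^ N from by ring]
    apply mul_le_mul_of_nonneg_right _ (pow_nonneg (Real.sqrt_nonneg _) _)
    apply mul_le_mul_of_nonneg_left (hgle _)
    positivity
  refine ⟨hsummable, ?_⟩
  -- Part 2 : the norm bound
  have hr₂sqpos : ∀ N : ℕ, (0:ℝ) < Real.sqrt r₂ ^ N :=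
    fun N => pow_pos (Real.sqrt_pos.2 hr₂pos) N
  have hFsummable : ∀ q : (Fin d → ℕ) × (Fin d → ℕ),
      Summable (fun γ : Fin d → ℕ =>
        Real.sqrt A ^ (msize q.1 + msize q.2) * A ^ msize γ * g (q.1 + γ, q.2 + γ)) := by
    intro q
    refine Summable.of_nonneg_of_le
      (f := fun γ : Fin d → ℕ => (Real.sqrt A ^ (msize q.1 + msize q.2) * B) * A ^ msize γ)
      (fun γ => mul_nonneg (mul_nonneg (pow_nonneg hsA0 _) (pow_nonneg hA0.le _)) (hgnonneg _))
      ?_ (hMsum.mul_left _)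
    intro γ
    beta_reduce
    rw [show (Real.sqrt A ^ (msize q.1 + msize q.2) * B) * A ^ msize γ
        = Real.sqrt A ^ (msize q.1 + msize q.2) * A ^ msize γ * B from by ring]
    exact mul_le_mul_of_nonneg_left (hgle _)
      (mul_nonneg (pow_nonneg hsA0 _) (pow_nonneg hA0.le _))
  set F : ((Fin d → ℕ) × (Fin d → ℕ)) → ℝ := fun q =>
    ∑' γ : Fin d → ℕ,
      Real.sqrt A ^ (msize q.1 + msize q.2) * A ^ msize γ * g (q.1 + γ, q.2 + γ) with hFdef
  have hFnonneg : ∀ q, 0 ≤ F q := fun q =>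
    tsum_nonneg fun γ =>
      mul_nonneg (mul_nonneg (pow_nonneg hsA0 _) (pow_nonneg hA0.le _)) (hgnonneg _)
  have hT0abs : ∀ q : (Fin d → ℕ) × (Fin d → ℕ),
      ‖T0star t b q‖ ≤ F q * Real.sqrt r₂ ^ (msize q.1 + msize q.2) := by
    intro q
    have hnorm : ‖T0star t b q‖
        ≤ ∑' γ : Fin d → ℕ, ‖T0starTerm t b q γ‖ := by
      rw [T0star]
      have hs : Summable (fun γ : Fin d → ℕ => ‖T0starTerm t b q γ‖) := by
        simpa using hsummable q
      have := norm_tsum_le_tsum_norm hs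
      simpa using this
    refine hnorm.trans ?_
    calc ∑' γ : Fin d → ℕ, ‖T0starTerm t b q γ‖
        ≤ ∑' γ : Fin d → ℕ,
            (Real.sqrt A ^ (msize q.1 + msize q.2) * A ^ msize γ * g (q.1 + γ, q.2 + γ))
              * Real.sqrt r₂ ^ (msize q.1 + msize q.2) :=
          Summable.tsum_le_tsum (estE q) (hsummable q) ((hFsummable q).mul_right _)
      _ = F q * Real.sqrt r₂ ^ (msize q.1 + msize q.2) := by rw [tsum_mul_right]
  have hlp2 : lpSum p r₂ (T0star t b)
      = ∑' q : (Fin d → ℕ) × (Fin d → ℕ),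
          ENNReal.ofReal ((‖T0star t b q‖
            / Real.sqrt r₂ ^ (msize q.1 + msize q.2)) ^ p) :=
    tsum_congr fun q => by
      rw [weight_eq hr₂pos p _ (norm_nonneg _) (msize q.1 + msize q.2)]
  set Gp : ((Fin d → ℕ) × (Fin d → ℕ)) → ENNReal := fun q => ENNReal.ofReal (g q ^ p)
    with hGpdef
  have step1 : lpSum p r₂ (T0star t b)
      ≤ ∑' q : (Fin d → ℕ) × (Fin d → ℕ), ENNReal.ofReal (F q ^ p) := by
    rw [hlp2]
    refine ENNReal.tsum_le_tsum fun q => ?_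
    apply ENNReal.ofReal_le_ofReal
    apply Real.rpow_le_rpow (div_nonneg (norm_nonneg _) (hr₂sqpos _).le) _ hp0.le
    rw [div_le_iff₀ (hr₂sqpos _)]
    exact hT0abs q
  have hWle : ∀ (N : ℕ) (γ : Fin d → ℕ),
      Real.sqrt A ^ N * A ^ msize γ ≤ A ^ msize γ := fun N γ =>
    mul_le_of_le_one_left (pow_nonneg hA0.le _) (pow_le_one₀ hsA0 hsA1)
  have step2 : ∀ q : (Fin d → ℕ) × (Fin d → ℕ), ENNReal.ofReal (F q ^ p)
      ≤ (∑' γ : Fin d → ℕ, ENNReal.ofReal (A ^ msize γ) * Gp (q.1 + γ, q.2 + γ))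
          * (ENNReal.ofReal M) ^ (p - 1) := by
    intro q
    have hofF : ENNReal.ofReal (F q)
        = ∑' γ : Fin d → ℕ,
            ENNReal.ofReal (Real.sqrt A ^ (msize q.1 + msize q.2) * A ^ msize γ)
              * ENNReal.ofReal (g (q.1 + γ, q.2 + γ)) := by
      rw [hFdef]
      simp only
      rw [ENNReal.ofReal_tsum_of_nonneg (fun γ =>
        mul_nonneg (mul_nonneg (pow_nonneg hsA0 _) (pow_nonneg hA0.le _)) (hgnonneg _))
        (hFsummable q)]
      refine tsum_congr fun γ => ?_
      rw [← ENNReal.ofReal_mul (mul_nonneg (pow_nonneg hsA0 _) (pow_nonneg hA0.le _))]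
    have hH := holder_tsum
      (w := fun γ : Fin d → ℕ =>
        ENNReal.ofReal (Real.sqrt A ^ (msize q.1 + msize q.2) * A ^ msize γ))
      (a := fun γ : Fin d → ℕ => ENNReal.ofReal (g (q.1 + γ, q.2 + γ))) hp
    calc ENNReal.ofReal (F q ^ p)
        = ENNReal.ofReal (F q) ^ p :=
          (ENNReal.ofReal_rpow_of_nonneg (hFnonneg q) hp0.le).symm
      _ = (∑' γ : Fin d → ℕ,
            ENNReal.ofReal (Real.sqrt A ^ (msize q.1 + msize q.2) * A ^ msize γ)
              * ENNReal.ofReal (g (q.1 + γ, q.2 + γ))) ^ p := by rw [hofF]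
      _ ≤ (∑' γ : Fin d → ℕ,
            ENNReal.ofReal (Real.sqrt A ^ (msize q.1 + msize q.2) * A ^ msize γ)
              * ENNReal.ofReal (g (q.1 + γ, q.2 + γ)) ^ p)
            * (∑' γ : Fin d → ℕ,
                ENNReal.ofReal (Real.sqrt A ^ (msize q.1 + msize q.2) * A ^ msize γ)) ^ (p-1) :=
          hH
      _ ≤ (∑' γ : Fin d → ℕ, ENNReal.ofReal (A ^ msize γ) * Gp (q.1 + γ, q.2 + γ))
            * (ENNReal.ofReal M) ^ (p - 1) := by
          refine mul_le_mul' ?_ (ENNReal.rpow_le_rpow ?_ (by linarith))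
          · refine ENNReal.tsum_le_tsum fun γ => ?_
            refine mul_le_mul' (ENNReal.ofReal_le_ofReal (hWle _ γ)) ?_
            rw [ENNReal.ofReal_rpow_of_nonneg (hgnonneg _) hp0.le]
          · calc ∑' γ : Fin d → ℕ,
                  ENNReal.ofReal (Real.sqrt A ^ (msize q.1 + msize q.2) * A ^ msize γ)
                ≤ ∑' γ : Fin d → ℕ, ENNReal.ofReal (A ^ msize γ) :=
                  ENNReal.tsum_le_tsum fun γ => ENNReal.ofReal_le_ofReal (hWle _ γ)
              _ = ENNReal.ofReal M :=
                  (ENNReal.ofReal_tsum_of_nonneg (fun γ => pow_nonneg hA0.le _) hMsum).symm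
  have step3 : ∑' q : (Fin d → ℕ) × (Fin d → ℕ), ENNReal.ofReal (F q ^ p)
      ≤ ENNReal.ofReal M * lpSum p r₁ b * (ENNReal.ofReal M) ^ (p - 1) := by
    calc ∑' q : (Fin d → ℕ) × (Fin d → ℕ), ENNReal.ofReal (F q ^ p)
        ≤ ∑' q : (Fin d → ℕ) × (Fin d → ℕ),
            (∑' γ : Fin d → ℕ, ENNReal.ofReal (A ^ msize γ) * Gp (q.1 + γ, q.2 + γ))
              * (ENNReal.ofReal M) ^ (p - 1) := ENNReal.tsum_le_tsum step2
      _ = (∑' q : (Fin d → ℕ) × (Fin d → ℕ),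
            ∑' γ : Fin d → ℕ, ENNReal.ofReal (A ^ msize γ) * Gp (q.1 + γ, q.2 + γ))
              * (ENNReal.ofReal M) ^ (p - 1) := ENNReal.tsum_mul_right
      _ ≤ (ENNReal.ofReal M * lpSum p r₁ b) * (ENNReal.ofReal M) ^ (p - 1) := by
          apply mul_le_mul_left
          rw [ENNReal.tsum_comm]
          calc ∑' γ : Fin d → ℕ, ∑' q : (Fin d → ℕ) × (Fin d → ℕ),
                ENNReal.ofReal (A ^ msize γ) * Gp (q.1 + γ, q.2 + γ)
              = ∑' γ : Fin d → ℕ, ENNReal.ofReal (A ^ msize γ)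
                  * ∑' q : (Fin d → ℕ) × (Fin d → ℕ), Gp (q.1 + γ, q.2 + γ) := by
                refine tsum_congr fun γ => ?_
                rw [ENNReal.tsum_mul_left]
            _ ≤ ∑' γ : Fin d → ℕ, ENNReal.ofReal (A ^ msize γ) * lpSum p r₁ b := by
                refine ENNReal.tsum_le_tsum fun γ => ?_
                refine mul_le_mul_right ?_ _
                have hinj : Function.Injective
                    (fun q : (Fin d → ℕ) × (Fin d → ℕ) => (q.1 + γ, q.2 + γ)) := by
                  rintro ⟨a1, a2⟩ ⟨b1, b2⟩ h
                  simp only [Prod.mk.injEq] at h ⊢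
                  exact ⟨add_left_injective γ h.1, add_left_injective γ h.2⟩
                have hcomp := ENNReal.tsum_comp_le_tsum_of_injective hinj Gp
                rw [hlp1]
                exact hcomp
            _ = (∑' γ : Fin d → ℕ, ENNReal.ofReal (A ^ msize γ)) * lpSum p r₁ b :=
                ENNReal.tsum_mul_right
            _ = ENNReal.ofReal M * lpSum p r₁ b := by
                rw [← ENNReal.ofReal_tsum_of_nonneg (fun γ => pow_nonneg hA0.le _) hMsum]
  refine step1.trans (step3.trans ?_)
  have e : ENNReal.ofReal M * (ENNReal.ofReal M) ^ (p - 1) = ENNReal.ofReal (M ^ p) := by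
    nth_rewrite 1 [← ENNReal.rpow_one (ENNReal.ofReal M)]
    rw [← ENNReal.rpow_add_of_nonneg 1 (p - 1) zero_le_one (by linarith)]
    rw [show (1 : ℝ) + (p - 1) = p from by ring]
    exact ENNReal.ofReal_rpow_of_nonneg hM0.le hp0.le
  rw [mul_right_comm, e]

end
end

section
/- Let d ≥ 1, 0 ≤ r < 1, and let a, a^{aw} : ℂ^d × ℂ^d → ℂ be wideparen-entire functions such that for every z ∈ ℂ^d the integral π^{−d} ∫_{ℂ^d} a(w₁,w₁) e^{−|z−w₁|²} dλ(w₁) converges absolutely and equals a^{aw}(z,z). If there is C > 0 with |a(w,w)| ≤ C e^{r|w|²} for all w ∈ ℂ^d, then there is C' > 0 such that |a^{aw}(z,w)| ≤ C' e^{r₀ |z+w|² − Re(z,w)} for all z, w ∈ ℂ^d, where r₀ = 1/(4(1−r)). -/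
open Finset MeasureTheory

noncomputable section

/-- The Hermitian pairing `(z,w) = Σⱼ zⱼ conj(wⱼ)` on `ℂ^d`. -/
def herm {d : ℕ} (z w : Fin d → ℂ) : ℂ := ∑ i, z i * (starRingEnd ℂ) (w i)

/-- `|z|² = Σⱼ |zⱼ|²` on `ℂ^d`. -/
def nsq {d : ℕ} (z : Fin d → ℂ) : ℝ := ∑ i, Complex.normSq (z i)

/-- A function `a : ℂ^d × ℂ^d → ℂ` is wideparen-entire if there is an entire
function `A` on `ℂ^{2d}` with `a(z,w) = A(z, w̄)` for all `z, w`. -/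
def WideparenEntire (d : ℕ) (a : (Fin d → ℂ) → (Fin d → ℂ) → ℂ) : Prop :=
  ∃ A : ((Fin d → ℂ) × (Fin d → ℂ)) → ℂ, AnalyticOnNhd ℂ A Set.univ ∧
    ∀ z w, a z w = A (z, fun i => (starRingEnd ℂ) (w i))

open Real

lemma st13_absorb {δ : ℝ} (hδ : 0 < δ) {c₃ : ℝ} (hc₃ : 0 ≤ c₃) {y : ℝ} (hy : 0 ≤ y) :
    (c₃ + 2 * y) * rexp (-(δ * y)) ≤ (c₃ + 4 / δ) * rexp (-(δ / 2 * y)) := by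
  have hsplit : rexp (-(δ * y)) = rexp (-(δ / 2 * y)) * rexp (-(δ / 2 * y)) := by
    rw [← Real.exp_add]; congr 1; ring
  rw [hsplit]
  have hq1 : rexp (-(δ / 2 * y)) ≤ 1 := Real.exp_le_one_iff.mpr (by nlinarith)
  have hqpos : 0 < rexp (-(δ / 2 * y)) := Real.exp_pos _
  have hkey : y * rexp (-(δ / 2 * y)) ≤ 2 / δ := by
    have h1 : δ / 2 * y + 1 ≤ rexp (δ / 2 * y) := Real.add_one_le_exp _
    have h2 : rexp (δ / 2 * y) * rexp (-(δ / 2 * y)) = 1 := by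
      rw [← Real.exp_add]; simp
    have h3 := mul_le_mul_of_nonneg_right h1 hqpos.le
    rw [h2] at h3
    -- h3 : (δ/2*y + 1) * rexp(-(δ/2*y)) ≤ 1
    have h4 : δ / 2 * (y * rexp (-(δ / 2 * y))) ≤ 1 := by nlinarith
    rw [le_div_iff₀ hδ]
    nlinarith
  have hmain : (c₃ + 2 * y) * rexp (-(δ / 2 * y)) ≤ c₃ + 4 / δ := by
    have h5 : c₃ * rexp (-(δ / 2 * y)) ≤ c₃ := by nlinarith
    have h44 : (4:ℝ) / δ = 2 * (2 / δ) := by ring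
    rw [h44]
    set q := rexp (-(δ / 2 * y)) with hq
    set D := (2:ℝ) / δ with hD
    nlinarith [h5, hkey]
  calc (c₃ + 2 * y) * (rexp (-(δ / 2 * y)) * rexp (-(δ / 2 * y)))
      = ((c₃ + 2 * y) * rexp (-(δ / 2 * y))) * rexp (-(δ / 2 * y)) := by ring
    _ ≤ (c₃ + 4 / δ) * rexp (-(δ / 2 * y)) := by
        apply mul_le_mul_of_nonneg_right hmain hqpos.le


lemma gauss1_integrable {b : ℝ} (hb : 0 < b) (c : ℝ) :
    Integrable (fun x : ℝ => rexp (-(b * x ^ 2) + c * x)) := by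
  have h : ∀ x : ℝ, rexp (-(b * x ^ 2) + c * x)
      = rexp (-b * (x - c / (2 * b)) ^ 2) * rexp (c ^ 2 / (4 * b)) := by
    intro x
    rw [← Real.exp_add]
    congr 1
    field_simp
    ring
  simp_rw [h]
  exact ((integrable_exp_neg_mul_sq hb).comp_sub_right (c / (2 * b))).mul_const _

lemma gauss1_integral {b : ℝ} (hb : 0 < b) (c : ℝ) :
    ∫ x : ℝ, rexp (-(b * x ^ 2) + c * x) = Real.sqrt (π / b) * rexp (c ^ 2 / (4 * b)) := by
  have h : ∀ x : ℝ, rexp (-(b * x ^ 2) + c * x)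
      = rexp (-b * (x - c / (2 * b)) ^ 2) * rexp (c ^ 2 / (4 * b)) := by
    intro x
    rw [← Real.exp_add]
    congr 1
    field_simp
    ring
  simp_rw [h]
  rw [integral_mul_const]
  congr 1
  have := integral_add_right_eq_self (μ := volume) (fun x : ℝ => rexp (-b * x ^ 2)) (-(c / (2 * b)))
  simp only [← sub_eq_add_neg] at this
  rw [this, integral_gaussian]

lemma gaussC_integrable {b : ℝ} (hb : 0 < b) (s : ℂ) :
    Integrable (fun z : ℂ => rexp (-(b * Complex.normSq z) + (z * (starRingEnd ℂ) s).re)) := by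
  have key : (fun z : ℂ => rexp (-(b * Complex.normSq z) + (z * (starRingEnd ℂ) s).re))
      = (fun p : ℝ × ℝ => rexp (-(b * p.1 ^ 2) + s.re * p.1) * rexp (-(b * p.2 ^ 2) + s.im * p.2))
        ∘ Complex.measurableEquivRealProd := by
    funext z
    simp only [Function.comp_apply, Complex.measurableEquivRealProd_apply]
    rw [← Real.exp_add]
    congr 1
    simp [Complex.normSq_apply, Complex.mul_re, Complex.conj_re, Complex.conj_im]
    ring
  rw [key, Complex.volume_preserving_equiv_real_prod.integrable_comp_emb
    Complex.measurableEquivRealProd.measurableEmbedding]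
  exact (gauss1_integrable hb s.re).mul_prod (gauss1_integrable hb s.im)

lemma gaussC_integral {b : ℝ} (hb : 0 < b) (s : ℂ) :
    ∫ z : ℂ, rexp (-(b * Complex.normSq z) + (z * (starRingEnd ℂ) s).re)
      = (π / b) * rexp (Complex.normSq s / (4 * b)) := by
  have key : ∀ z : ℂ, rexp (-(b * Complex.normSq z) + (z * (starRingEnd ℂ) s).re)
      = (fun p : ℝ × ℝ => rexp (-(b * p.1 ^ 2) + s.re * p.1) * rexp (-(b * p.2 ^ 2) + s.im * p.2))
        (Complex.measurableEquivRealProd z) := by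
    intro z
    simp only [Complex.measurableEquivRealProd_apply]
    rw [← Real.exp_add]
    congr 1
    simp [Complex.normSq_apply, Complex.mul_re, Complex.conj_re, Complex.conj_im]
    ring
  simp_rw [key]
  have h2 := Complex.volume_preserving_equiv_real_prod.integral_comp
    Complex.measurableEquivRealProd.measurableEmbedding
    (fun p : ℝ × ℝ => rexp (-(b * p.1 ^ 2) + s.re * p.1) * rexp (-(b * p.2 ^ 2) + s.im * p.2))
  beta_reduce at h2
  rw [h2]
  rw [MeasureTheory.Measure.volume_eq_prod]
  have h3 := MeasureTheory.integral_prod_mul (μ := volume) (ν := volume)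
    (f := fun x : ℝ => rexp (-(b * x ^ 2) + s.re * x)) (g := fun y : ℝ => rexp (-(b * y ^ 2) + s.im * y))
  beta_reduce at h3
  rw [h3, gauss1_integral hb, gauss1_integral hb]
  rw [show Real.sqrt (π / b) * rexp (s.re ^ 2 / (4 * b)) * (Real.sqrt (π / b) * rexp (s.im ^ 2 / (4 * b)))
      = (Real.sqrt (π / b) * Real.sqrt (π / b)) * (rexp (s.re ^ 2 / (4 * b)) * rexp (s.im ^ 2 / (4 * b))) by ring]
  rw [Real.mul_self_sqrt (by positivity), ← Real.exp_add]
  congr 1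
  rw [Complex.normSq_apply]
  ring

lemma gaussPi_integrable {d : ℕ} {b : ℝ} (hb : 0 < b) (s : Fin d → ℂ) :
    Integrable (fun x : Fin d → ℂ => rexp (-(b * nsq x) + (herm x s).re)) := by
  have key : (fun x : Fin d → ℂ => rexp (-(b * nsq x) + (herm x s).re))
      = fun x : Fin d → ℂ => ∏ i,
          (fun ζ : ℂ => rexp (-(b * Complex.normSq ζ) + (ζ * (starRingEnd ℂ) (s i)).re)) (x i) := by
    funext x
    rw [← Real.exp_sum]
    congr 1
    simp only [nsq, herm, Complex.re_sum, Finset.mul_sum, neg_add_rev]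
    rw [← Finset.sum_neg_distrib, ← Finset.sum_add_distrib]
  rw [key]
  exact Integrable.fintype_prod (fun i => gaussC_integrable hb (s i))

lemma gaussPi_integral {d : ℕ} {b : ℝ} (hb : 0 < b) (s : Fin d → ℂ) :
    ∫ x : Fin d → ℂ, rexp (-(b * nsq x) + (herm x s).re)
      = (π / b) ^ d * rexp (nsq s / (4 * b)) := by
  have key : (fun x : Fin d → ℂ => rexp (-(b * nsq x) + (herm x s).re))
      = fun x : Fin d → ℂ => ∏ i,
          (fun ζ : ℂ => rexp (-(b * Complex.normSq ζ) + (ζ * (starRingEnd ℂ) (s i)).re)) (x i) := by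
    funext x
    rw [← Real.exp_sum]
    congr 1
    simp only [nsq, herm, Complex.re_sum, Finset.mul_sum, neg_add_rev]
    rw [← Finset.sum_neg_distrib, ← Finset.sum_add_distrib]
  rw [key]
  have h2 := MeasureTheory.integral_fintype_prod_eq_prod (ι := Fin d) (μ := fun _ => volume)
    (fun i (ζ : ℂ) => rexp (-(b * Complex.normSq ζ) + (ζ * (starRingEnd ℂ) (s i)).re))
  beta_reduce at h2
  rw [← MeasureTheory.volume_pi] at h2
  rw [h2]
  simp_rw [gaussC_integral hb]
  rw [Finset.prod_mul_distrib, Finset.prod_const, ← Real.exp_sum]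
  simp [nsq, Finset.sum_div]


lemma st13_amgm {ε η : ℝ} (hε : 0 < ε) (hη : 0 < η) (hprod : ε * η = 1) (a b : ℝ) :
    a * b ≤ ε / 2 * a ^ 2 + η / 2 * b ^ 2 := by
  have h2 := mul_nonneg hη.le (sq_nonneg (ε * a - b))
  have hexp : η * (ε * a - b) ^ 2
      = (ε * η) * (ε * a ^ 2) - 2 * (ε * η) * (a * b) + η * b ^ 2 := by ring
  rw [hexp, hprod] at h2
  linarith

namespace Stmt13

variable {d : ℕ}

lemma nsq_nonneg (x : Fin d → ℂ) : 0 ≤ nsq x :=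
  Finset.sum_nonneg fun i _ => Complex.normSq_nonneg _

/-- `α(x) = |u - x|²` -/
def al (u x : Fin d → ℂ) : ℝ := ∑ i, Complex.normSq (u i - x i)

/-- `ρ(x) = Re (u-x, v)` -/
def rh (u v x : Fin d → ℂ) : ℝ := ∑ i, ((u i - x i) * (starRingEnd ℂ) (v i)).re

/-- the holomorphic quadratic phase -/
def ph (u v : Fin d → ℂ) (t : ℂ) (x : Fin d → ℂ) : ℂ :=
  ((al u x : ℝ) : ℂ) + t * ((2 * rh u v x : ℝ) : ℂ) + t ^ 2 * ((nsq v : ℝ) : ℂ)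

lemma al_nonneg (u x : Fin d → ℂ) : 0 ≤ al u x :=
  Finset.sum_nonneg fun i _ => Complex.normSq_nonneg _

lemma cs {ε η : ℝ} (hε : 0 < ε) (hη : 0 < η) (hprod : ε * η = 1) (u v x : Fin d → ℂ) :
    |rh u v x| ≤ ε / 2 * al u x + η / 2 * nsq v := by
  calc |rh u v x| ≤ ∑ i, |((u i - x i) * (starRingEnd ℂ) (v i)).re| :=
        Finset.abs_sum_le_sum_abs _ _
    _ ≤ ∑ i, (ε / 2 * Complex.normSq (u i - x i) + η / 2 * Complex.normSq (v i)) := by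
        apply Finset.sum_le_sum
        intro i _
        have h1 : |((u i - x i) * (starRingEnd ℂ) (v i)).re|
            ≤ ‖u i - x i‖ * ‖v i‖ := by
          calc |((u i - x i) * (starRingEnd ℂ) (v i)).re|
              ≤ ‖(u i - x i) * (starRingEnd ℂ) (v i)‖ := Complex.abs_re_le_norm _
            _ = ‖u i - x i‖ * ‖v i‖ := by
                rw [norm_mul, Complex.norm_conj]
        have h2 := st13_amgm hε hη hprod (‖u i - x i‖) (‖v i‖)
        rw [← Complex.sq_norm, ← Complex.sq_norm]
        linarith
    _ = ε / 2 * al u x + η / 2 * nsq v := by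
        rw [Finset.sum_add_distrib, ← Finset.mul_sum, ← Finset.mul_sum]; rfl

lemma tri {ε η : ℝ} (hε : 0 < ε) (hη : 0 < η) (hprod : ε * η = 1) (u x : Fin d → ℂ) :
    nsq x ≤ (1 + ε) * al u x + (1 + η) * nsq u := by
  calc nsq x = ∑ i, Complex.normSq (x i) := rfl
    _ ≤ ∑ i, ((1 + ε) * Complex.normSq (u i - x i) + (1 + η) * Complex.normSq (u i)) := by
        apply Finset.sum_le_sum
        intro i _
        have habs : ‖x i‖ ≤ ‖u i - x i‖ + ‖u i‖ := by
          have h0 : x i = u i - (u i - x i) := by ring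
          calc ‖x i‖ = ‖u i - (u i - x i)‖ := by rw [← h0]
            _ ≤ ‖u i‖ + ‖u i - x i‖ := by
                simpa using norm_sub_le (u i) (u i - x i)
            _ = ‖u i - x i‖ + ‖u i‖ := by ring
        have hc2 : ‖x i‖ ^ 2
            ≤ (‖u i - x i‖ + ‖u i‖) ^ 2 :=
          pow_le_pow_left₀ (norm_nonneg _) habs 2
        have h3 := st13_amgm hε hη hprod (‖u i - x i‖) (‖u i‖)
        rw [← Complex.sq_norm, ← Complex.sq_norm, ← Complex.sq_norm]
        nlinarith [norm_nonneg (u i - x i), norm_nonneg (u i)]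
    _ = (1 + ε) * al u x + (1 + η) * nsq u := by
        rw [Finset.sum_add_distrib, ← Finset.mul_sum, ← Finset.mul_sum]; rfl

lemma al_ub (u x : Fin d → ℂ) : al u x ≤ 2 * nsq u + 2 * nsq x := by
  have hper : ∀ i : Fin d, Complex.normSq (u i - x i)
      ≤ 2 * Complex.normSq (u i) + 2 * Complex.normSq (x i) := by
    intro i
    have habs : ‖u i - x i‖ ≤ ‖u i‖ + ‖x i‖ := by
      simpa using norm_sub_le (u i) (x i)
    have hc2 : ‖u i - x i‖ ^ 2 ≤ (‖u i‖ + ‖x i‖) ^ 2 :=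
      pow_le_pow_left₀ (norm_nonneg _) habs 2
    rw [← Complex.sq_norm, ← Complex.sq_norm, ← Complex.sq_norm]
    nlinarith [sq_nonneg (‖u i‖ - ‖x i‖)]
  calc al u x ≤ ∑ i, (2 * Complex.normSq (u i) + 2 * Complex.normSq (x i)) :=
        Finset.sum_le_sum fun i _ => hper i
    _ = 2 * nsq u + 2 * nsq x := by
        rw [Finset.sum_add_distrib, ← Finset.mul_sum, ← Finset.mul_sum]; rfl

lemma ph_deriv (u v x : Fin d → ℂ) (t : ℂ) :
    HasDerivAt (fun t' => ph u v t' x)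
      (((2 * rh u v x : ℝ) : ℂ) + 2 * t * ((nsq v : ℝ) : ℂ)) t := by
  have h1 : HasDerivAt (fun t' : ℂ => t' * ((2 * rh u v x : ℝ) : ℂ))
      ((2 * rh u v x : ℝ) : ℂ) t := hasDerivAt_mul_const _
  have h2 : HasDerivAt (fun t' : ℂ => t' ^ 2 * ((nsq v : ℝ) : ℂ))
      (2 * t * ((nsq v : ℝ) : ℂ)) t := by
    simpa using (hasDerivAt_pow 2 t).mul_const ((nsq v : ℝ) : ℂ)
  exact (h1.const_add _).add h2

lemma ph_cont (u v : Fin d → ℂ) (t : ℂ) : Continuous (fun x => ph u v t x) := by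
  have hal : Continuous (al u) :=
    continuous_finset_sum _ fun i _ =>
      Complex.continuous_normSq.comp (continuous_const.sub (continuous_apply i))
  have hrh : Continuous (rh u v) :=
    continuous_finset_sum _ fun i _ =>
      Complex.continuous_re.comp ((continuous_const.sub (continuous_apply i)).mul continuous_const)
  unfold ph
  apply Continuous.add
  apply Continuous.add
  · exact Complex.continuous_ofReal.comp hal
  · exact continuous_const.mul (Complex.continuous_ofReal.comp (continuous_const.mul hrh))
  · exact continuous_const

lemma ph_re_ge (u v x : Fin d → ℂ) (t : ℂ) :
    al u x - ‖t‖ * (2 * |rh u v x|) - ‖t‖ ^ 2 * nsq v ≤ (ph u v t x).re := by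
  have hre : (ph u v t x).re = al u x + 2 * rh u v x * t.re + nsq v * (t ^ 2).re := by
    simp only [ph, Complex.add_re, Complex.mul_re, Complex.ofReal_re, Complex.ofReal_im]
    ring
  rw [hre]
  have h1 : -(‖t‖ * (2 * |rh u v x|)) ≤ 2 * rh u v x * t.re := by
    have h2 : |t.re| ≤ ‖t‖ := Complex.abs_re_le_norm t
    have h3 : |2 * rh u v x * t.re| ≤ 2 * |rh u v x| * ‖t‖ := by
      rw [abs_mul, abs_mul, abs_two]
      apply mul_le_mul_of_nonneg_left h2 (by positivity)
    have h4 := neg_abs_le (2 * rh u v x * t.re)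
    nlinarith
  have h4 : -(‖t‖ ^ 2 * nsq v) ≤ nsq v * (t ^ 2).re := by
    have h5 : |(t ^ 2).re| ≤ ‖t ^ 2‖ := Complex.abs_re_le_norm _
    rw [norm_pow] at h5
    have h6 := neg_abs_le ((t ^ 2).re)
    nlinarith [nsq_nonneg v]
  linarith

lemma ph_real (u v : Fin d → ℂ) (τ : ℝ) (x : Fin d → ℂ) :
    ph u v (↑τ) x = ((∑ i, Complex.normSq (u i + (τ:ℂ) * v i - x i) : ℝ) : ℂ) := by
  have hsum : al u x + τ * (2 * rh u v x) + τ ^ 2 * nsq v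
      = ∑ i, Complex.normSq (u i + (τ:ℂ) * v i - x i) := by
    unfold al rh nsq
    rw [Finset.mul_sum, Finset.mul_sum, Finset.mul_sum]
    rw [← Finset.sum_add_distrib, ← Finset.sum_add_distrib]
    apply Finset.sum_congr rfl
    intro i _
    simp only [Complex.normSq_apply, Complex.add_re, Complex.add_im, Complex.sub_re,
      Complex.sub_im, Complex.mul_re, Complex.mul_im, Complex.ofReal_re, Complex.ofReal_im,
      Complex.conj_re, Complex.conj_im]
    ring
  rw [← hsum]
  unfold ph
  push_cast
  ring

lemma ph_I_re (u v x : Fin d → ℂ) : (ph u v Complex.I x).re = al u x - nsq v := by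
  simp only [ph, Complex.I_sq, Complex.add_re, Complex.mul_re, Complex.I_re, Complex.I_im,
    Complex.ofReal_re, Complex.ofReal_im, Complex.neg_re, Complex.one_re]
  ring

lemma al_expand (u x : Fin d → ℂ) :
    al u x = nsq u - 2 * (herm x u).re + nsq x := by
  unfold al nsq herm
  rw [Complex.re_sum, Finset.mul_sum]
  rw [← Finset.sum_sub_distrib, ← Finset.sum_add_distrib]
  apply Finset.sum_congr rfl
  intro i _
  simp only [Complex.normSq_apply, Complex.sub_re, Complex.sub_im, Complex.mul_re,
    Complex.conj_re, Complex.conj_im]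
  ring

lemma herm_two (u x : Fin d → ℂ) :
    (herm x (fun i => 2 * u i)).re = 2 * (herm x u).re := by
  unfold herm
  rw [Complex.re_sum, Complex.re_sum, Finset.mul_sum]
  apply Finset.sum_congr rfl
  intro i _
  rw [map_mul]
  simp only [Complex.mul_re, Complex.conj_re, Complex.conj_im, Complex.mul_im]
  norm_num
  ring

lemma nsq_two (u : Fin d → ℂ) : nsq (fun i => 2 * u i) = 4 * nsq u := by
  unfold nsq
  rw [Finset.mul_sum]
  apply Finset.sum_congr rfl
  intro i _
  rw [map_mul]
  norm_num [Complex.normSq_apply]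

lemma nsq_half_add (z w : Fin d → ℂ) :
    nsq (fun i => (z i + w i) / 2) = nsq (z + w) / 4 := by
  unfold nsq
  rw [Finset.sum_div]
  apply Finset.sum_congr rfl
  intro i _
  rw [map_div₀]
  norm_num [Complex.normSq_apply, Pi.add_apply]

lemma nsq_half_sub (z w : Fin d → ℂ) :
    nsq (fun i => (z i - w i) / (2 * Complex.I)) = nsq (z - w) / 4 := by
  unfold nsq
  rw [Finset.sum_div]
  apply Finset.sum_congr rfl
  intro i _
  rw [map_div₀]
  have : Complex.normSq (2 * Complex.I) = 4 := by
    rw [map_mul, Complex.normSq_I]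
    norm_num [Complex.normSq_apply]
  rw [this, Pi.sub_apply]

lemma polar (z w : Fin d → ℂ) :
    nsq (z - w) = nsq (z + w) - 4 * (herm z w).re := by
  unfold nsq herm
  rw [Complex.re_sum, Finset.mul_sum, ← Finset.sum_sub_distrib]
  apply Finset.sum_congr rfl
  intro i _
  simp only [Pi.sub_apply, Pi.add_apply, Complex.normSq_apply, Complex.sub_re, Complex.sub_im,
    Complex.add_re, Complex.add_im, Complex.mul_re, Complex.conj_re, Complex.conj_im]
  ring

lemma scalar1 (p q : ℂ) : (p + q) / 2 + Complex.I * ((p - q) / (2 * Complex.I)) = p := by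
  field_simp
  ring

lemma scalar2 (p q : ℂ) :
    (starRingEnd ℂ) ((p + q) / 2)
      + Complex.I * (starRingEnd ℂ) ((p - q) / (2 * Complex.I)) = (starRingEnd ℂ) q := by
  simp only [map_div₀, map_add, map_sub, map_mul, Complex.conj_I, map_ofNat]
  field_simp
  ring

end Stmt13



set_option maxHeartbeats 1000000

open Stmt13 in
/-- if `a^{aw}` is the Wick symbol of the anti-Wick operator with symbol
`a`, and `|a(w,w)| ≤ C e^{r|w|²}` with `0 ≤ r < 1`, then
`|a^{aw}(z,w)| ≤ C' e^{r₀|z+w|² − Re(z,w)}` with `r₀ = 1/(4(1−r))`. -/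
theorem stmt_13 (d : ℕ) (hd : 1 ≤ d) (r : ℝ) (hr0 : 0 ≤ r) (hr1 : r < 1)
    (a aaw : (Fin d → ℂ) → (Fin d → ℂ) → ℂ)
    (ha : WideparenEntire d a) (haaw : WideparenEntire d aaw)
    (hint : ∀ z : Fin d → ℂ,
      Integrable (fun w₁ : Fin d → ℂ =>
        a w₁ w₁ * (Real.exp (-(nsq (z - w₁))) : ℂ)) ∧
      aaw z z = ((Real.pi : ℂ) ^ d)⁻¹ *
        ∫ w₁ : Fin d → ℂ, a w₁ w₁ * (Real.exp (-(nsq (z - w₁))) : ℂ))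
    (hbound : ∃ C > (0:ℝ), ∀ w : Fin d → ℂ,
      ‖a w w‖ ≤ C * Real.exp (r * nsq w)) :
    ∃ C' > (0:ℝ), ∀ z w : Fin d → ℂ,
      ‖aaw z w‖ ≤
        C' * Real.exp ((1 / (4 * (1 - r))) * nsq (z + w) - (herm z w).re) := by
  obtain ⟨A, hA, hArep⟩ := haaw
  obtain ⟨Aa, hAa, hAarep⟩ := ha
  obtain ⟨C, hCpos, hCb⟩ := hbound
  have h1r : (0:ℝ) < 1 - r := by linarith
  -- continuity of the diagonal of `a`
  have hAacont : Continuous Aa := by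
    rw [← continuousOn_univ]; exact hAa.continuousOn
  have haacont : Continuous (fun x : Fin d → ℂ => a x x) := by
    have hm : Continuous (fun x : Fin d → ℂ =>
        ((x, fun i => (starRingEnd ℂ) (x i)) : (Fin d → ℂ) × (Fin d → ℂ))) :=
      continuous_id.prodMk (continuous_pi fun i =>
        Complex.continuous_conj.comp (continuous_apply i))
    have hrw : (fun x : Fin d → ℂ => a x x)
        = fun x : Fin d → ℂ => Aa (x, fun i => (starRingEnd ℂ) (x i)) := by
      funext x; exact hAarep x x
    rw [hrw]; exact hAacont.comp hm
  have hAdiff : Differentiable ℂ A := fun x => (hA x (Set.mem_univ x)).differentiableAt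
  -- parameters
  have hspos : 0 < (1 + r) / 2 := by linarith
  have hslt : (1 + r) / 2 < 1 := by linarith
  have hδpos : 0 < (1 - r) / 2 := by linarith
  refine ⟨C / (1 - r) ^ d, by positivity, ?_⟩
  intro z w
  set s : ℝ := (1 + r) / 2 with hs_def
  set δ : ℝ := (1 - r) / 2 with hδ_def
  set u : Fin d → ℂ := fun i => (z i + w i) / 2 with hu_def
  set v : Fin d → ℂ := fun i => (z i - w i) / (2 * Complex.I) with hv_def
  set F : ℂ → (Fin d → ℂ) → ℂ := fun t x => a x x * Complex.exp (-ph u v t x) with hF_def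
  set F' : ℂ → (Fin d → ℂ) → ℂ := fun t x =>
    a x x * (Complex.exp (-ph u v t x)
      * -(((2 * rh u v x : ℝ) : ℂ) + 2 * t * ((nsq v : ℝ) : ℂ))) with hF'_def
  have hγnn : 0 ≤ nsq v := nsq_nonneg v
  have hUnn : 0 ≤ nsq u := nsq_nonneg u
  -- measurability
  have hFmeas : ∀ t, AEStronglyMeasurable (F t) volume := by
    intro t
    rw [hF_def]
    exact (haacont.mul (Complex.continuous_exp.comp (ph_cont u v t).neg)).aestronglyMeasurable
  have hF'meas : ∀ t, AEStronglyMeasurable (F' t) volume := by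
    intro t
    rw [hF'_def]
    apply Continuous.aestronglyMeasurable
    apply haacont.mul
    apply Continuous.mul (Complex.continuous_exp.comp (ph_cont u v t).neg)
    apply Continuous.neg
    apply Continuous.add
    · apply Complex.continuous_ofReal.comp
      apply continuous_const.mul
      exact continuous_finset_sum _ fun i _ => Complex.continuous_re.comp
        ((continuous_const.sub (continuous_apply i)).mul continuous_const)
    · exact continuous_const
  -- derivative in t
  have hderiv : ∀ (x : Fin d → ℂ) (t : ℂ), HasDerivAt (fun t' => F t' x) (F' t x) t := by
    intro x t
    rw [hF_def, hF'_def]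
    exact ((ph_deriv u v x t).neg.cexp).const_mul (a x x)
  -- master lower bound on Re ph
  have master : ∀ T : ℝ, 1 ≤ T → ∃ K : ℝ, 0 ≤ K ∧
      ∀ (t : ℂ) (x : Fin d → ℂ), ‖t‖ ≤ T →
        s * nsq x - K ≤ (ph u v t x).re := by
    intro T hT
    have hTpos : (0:ℝ) < T := by linarith
    have h1s : (0:ℝ) < 1 - s := by rw [hs_def]; linarith
    set ε₁ : ℝ := (1 - s) / (2 * T) with hε₁_def
    set η₁ : ℝ := (2 * T) / (1 - s) with hη₁_def
    set ε₂ : ℝ := (1 - s) / (2 * s) with hε₂_def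
    set η₂ : ℝ := (2 * s) / (1 - s) with hη₂_def
    have hε₁ : 0 < ε₁ := by rw [hε₁_def]; positivity
    have hη₁ : 0 < η₁ := by rw [hη₁_def]; positivity
    have hε₂ : 0 < ε₂ := by rw [hε₂_def]; positivity
    have hη₂ : 0 < η₂ := by rw [hη₂_def]; positivity
    have hprod₁ : ε₁ * η₁ = 1 := by rw [hε₁_def, hη₁_def]; field_simp
    have hprod₂ : ε₂ * η₂ = 1 := by rw [hε₂_def, hη₂_def]; field_simp
    have hTε₁ : T * ε₁ = (1 - s) / 2 := by rw [hε₁_def]; field_simp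
    have hsε₂ : s * ε₂ = (1 - s) / 2 := by rw [hε₂_def]; field_simp
    refine ⟨s * (1 + η₂) * nsq u + (T * η₁ + T ^ 2) * nsq v, by positivity, ?_⟩
    intro t x htT
    have habs := norm_nonneg t
    have hρnn : (0:ℝ) ≤ |rh u v x| := abs_nonneg _
    have f3 : ‖t‖ * (2 * |rh u v x|) ≤ T * (2 * |rh u v x|) :=
      mul_le_mul_of_nonneg_right htT (by positivity)
    have f4 : ‖t‖ ^ 2 * nsq v ≤ T ^ 2 * nsq v :=
      mul_le_mul_of_nonneg_right (pow_le_pow_left₀ habs htT 2) hγnn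
    have f1 : T * (2 * |rh u v x|) ≤ (1 - s) / 2 * al u x + (T * η₁) * nsq v := by
      have h := mul_le_mul_of_nonneg_left (cs hε₁ hη₁ hprod₁ u v x)
        (by positivity : (0:ℝ) ≤ 2 * T)
      calc T * (2 * |rh u v x|) = 2 * T * |rh u v x| := by ring
        _ ≤ 2 * T * (ε₁ / 2 * al u x + η₁ / 2 * nsq v) := h
        _ = (T * ε₁) * al u x + (T * η₁) * nsq v := by ring
        _ = (1 - s) / 2 * al u x + (T * η₁) * nsq v := by rw [hTε₁]
    have f2 : s * nsq x ≤ (1 + s) / 2 * al u x + s * (1 + η₂) * nsq u := by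
      have h := mul_le_mul_of_nonneg_left (tri hε₂ hη₂ hprod₂ u x) hspos.le
      calc s * nsq x ≤ s * ((1 + ε₂) * al u x + (1 + η₂) * nsq u) := h
        _ = (s + s * ε₂) * al u x + s * (1 + η₂) * nsq u := by ring
        _ = (1 + s) / 2 * al u x + s * (1 + η₂) * nsq u := by rw [hsε₂]; ring
    have h0 := ph_re_ge u v x t
    have hαx := al_nonneg u x
    linarith
  -- the integrable gaussian majorant
  have hGauss0 : ∀ {b : ℝ}, 0 < b →
      Integrable (fun x : Fin d → ℂ => rexp (-(b * nsq x))) := by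
    intro b hb
    have := gaussPi_integrable (d := d) hb 0
    simpa [herm] using this
  -- differentiability of the parameter integral
  have hIntDiff : Differentiable ℂ (fun t => ∫ x : Fin d → ℂ, F t x) := by
    intro t₀
    set T : ℝ := ‖t₀‖ + 1 with hT_def
    have hT : 1 ≤ T := by
      rw [hT_def]; have := norm_nonneg t₀; linarith
    obtain ⟨K, hKnn, hK⟩ := master T hT
    set c₃ : ℝ := 2 * nsq u + (1 + 2 * T) * nsq v with hc₃_def
    have hc₃nn : 0 ≤ c₃ := by rw [hc₃_def]; nlinarith
    -- pointwise bound of F t₀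
    have hFbound : ∀ t : ℂ, ‖t‖ ≤ T → ∀ x,
        ‖F t x‖ ≤ (C * rexp K) * rexp (-(δ * nsq x)) := by
      intro t htT x
      have hnorm : ‖F t x‖ = ‖a x x‖ * rexp (-(ph u v t x).re) := by
        rw [hF_def]
        simp only [norm_mul, Complex.norm_exp, Complex.neg_re]
      rw [hnorm]
      have e1 : ‖a x x‖ ≤ C * rexp (r * nsq x) := hCb x
      have e2 : rexp (-(ph u v t x).re) ≤ rexp (K - s * nsq x) := by
        apply Real.exp_le_exp.mpr
        have := hK t x htT
        linarith
      calc ‖a x x‖ * rexp (-(ph u v t x).re)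
          ≤ (C * rexp (r * nsq x)) * rexp (K - s * nsq x) := by
            apply mul_le_mul e1 e2 (Real.exp_pos _).le (by positivity)
        _ = (C * rexp K) * rexp (-(δ * nsq x)) := by
            rw [mul_assoc, ← Real.exp_add, mul_assoc, ← Real.exp_add]
            congr 2
            rw [hδ_def, hs_def]; ring
    -- pointwise bound of F' on the ball
    have key : ∀ (x : Fin d → ℂ), ∀ t ∈ Metric.ball t₀ 1,
        ‖F' t x‖ ≤ (C * rexp K * (c₃ + 4 / δ)) * rexp (-(δ / 2 * nsq x)) := by
      intro x t ht
      have htT : ‖t‖ ≤ T := by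
        rw [hT_def]
        have h1 : dist t t₀ < 1 := Metric.mem_ball.mp ht
        have h2 : ‖t - t₀‖ < 1 := by rw [← Complex.dist_eq]; exact h1
        calc ‖t‖ = ‖t₀ + (t - t₀)‖ := by ring_nf
          _ ≤ ‖t₀‖ + ‖t - t₀‖ := norm_add_le _ _
          _ ≤ ‖t₀‖ + 1 := by linarith
      have hpre : ‖((2 * rh u v x : ℝ) : ℂ) + 2 * t * ((nsq v : ℝ) : ℂ)‖
          ≤ c₃ + 2 * nsq x := by
        have h1 : ‖((2 * rh u v x : ℝ) : ℂ) + 2 * t * ((nsq v : ℝ) : ℂ)‖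
            ≤ 2 * |rh u v x| + 2 * T * nsq v := by
          calc ‖((2 * rh u v x : ℝ) : ℂ) + 2 * t * ((nsq v : ℝ) : ℂ)‖
              ≤ ‖((2 * rh u v x : ℝ) : ℂ)‖
                + ‖2 * t * ((nsq v : ℝ) : ℂ)‖ := norm_add_le _ _
            _ = |2 * rh u v x| + 2 * ‖t‖ * nsq v := by
                rw [Complex.norm_real, Real.norm_eq_abs, norm_mul, norm_mul, Complex.norm_real,
                  Real.norm_eq_abs, Complex.norm_two, abs_of_nonneg hγnn]
            _ ≤ 2 * |rh u v x| + 2 * T * nsq v := by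
                rw [abs_mul, abs_two]
                have := mul_le_mul_of_nonneg_right htT hγnn
                nlinarith [norm_nonneg t]
        have h2 := cs one_pos one_pos (by norm_num) u v x
        have h3 := al_ub u x
        rw [hc₃_def]
        linarith
      have hnorm : ‖F' t x‖ = ‖a x x‖ * (rexp (-(ph u v t x).re)
          * ‖((2 * rh u v x : ℝ) : ℂ) + 2 * t * ((nsq v : ℝ) : ℂ)‖) := by
        rw [hF'_def]
        simp only [norm_mul, Complex.norm_exp, norm_neg,
          Complex.neg_re]
      rw [hnorm]
      have e1 : ‖a x x‖ ≤ C * rexp (r * nsq x) := hCb x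
      have e2 : rexp (-(ph u v t x).re) ≤ rexp (K - s * nsq x) := by
        apply Real.exp_le_exp.mpr
        have := hK t x htT
        linarith
      have hle : ‖a x x‖ * (rexp (-(ph u v t x).re)
            * ‖((2 * rh u v x : ℝ) : ℂ) + 2 * t * ((nsq v : ℝ) : ℂ)‖)
          ≤ (C * rexp (r * nsq x)) * (rexp (K - s * nsq x) * (c₃ + 2 * nsq x)) := by
        apply mul_le_mul e1 _ (by positivity) (by positivity)
        apply mul_le_mul e2 hpre (norm_nonneg _) (Real.exp_pos _).le
      apply le_trans hle
      have hexp : rexp (r * nsq x) * rexp (K - s * nsq x) = rexp K * rexp (-(δ * nsq x)) := by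
        rw [← Real.exp_add, ← Real.exp_add]
        congr 1
        rw [hδ_def, hs_def]; ring
      have hcomb : (C * rexp (r * nsq x)) * (rexp (K - s * nsq x) * (c₃ + 2 * nsq x))
          = (C * rexp K) * ((c₃ + 2 * nsq x) * rexp (-(δ * nsq x))) := by
        calc (C * rexp (r * nsq x)) * (rexp (K - s * nsq x) * (c₃ + 2 * nsq x))
            = C * (rexp (r * nsq x) * rexp (K - s * nsq x)) * (c₃ + 2 * nsq x) := by ring
          _ = C * (rexp K * rexp (-(δ * nsq x))) * (c₃ + 2 * nsq x) := by rw [hexp]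
          _ = (C * rexp K) * ((c₃ + 2 * nsq x) * rexp (-(δ * nsq x))) := by ring
      rw [hcomb]
      have habsorb := st13_absorb hδpos hc₃nn (nsq_nonneg x)
      calc (C * rexp K) * ((c₃ + 2 * nsq x) * rexp (-(δ * nsq x)))
          ≤ (C * rexp K) * ((c₃ + 4 / δ) * rexp (-(δ / 2 * nsq x))) := by
            apply mul_le_mul_of_nonneg_left habsorb (by positivity)
        _ = (C * rexp K * (c₃ + 4 / δ)) * rexp (-(δ / 2 * nsq x)) := by ring
    -- integrability of F t₀
    have hFint : Integrable (F t₀) := by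
      apply Integrable.mono' (((hGauss0 hδpos).const_mul (C * rexp K))) (hFmeas t₀)
      apply Filter.Eventually.of_forall
      intro x
      exact hFbound t₀ (by rw [hT_def]; linarith) x
    have hbint : Integrable
        (fun x : Fin d → ℂ => (C * rexp K * (c₃ + 4 / δ)) * rexp (-(δ / 2 * nsq x))) := by
      have hδ2 : (0:ℝ) < δ / 2 := by positivity
      have := (hGauss0 hδ2).const_mul (C * rexp K * (c₃ + 4 / δ))
      simpa [mul_comm, mul_assoc, mul_left_comm] using this
    obtain ⟨-, hHD⟩ := hasDerivAt_integral_of_dominated_loc_of_deriv_le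
      (F := F) (F' := F') (μ := volume)
      (bound := fun x : Fin d → ℂ => (C * rexp K * (c₃ + 4 / δ)) * rexp (-(δ / 2 * nsq x)))
      (Metric.ball_mem_nhds t₀ one_pos)
      (Filter.Eventually.of_forall fun t => hFmeas t) hFint (hF'meas t₀)
      (Filter.Eventually.of_forall fun x t ht => key x t ht) hbint
      (Filter.Eventually.of_forall fun x t _ => hderiv x t)
    exact hHD.differentiableAt
  -- the two entire functions
  set G : ℂ → ℂ := fun t => ((Real.pi : ℂ) ^ d)⁻¹ * ∫ x : Fin d → ℂ, F t x with hG_def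
  have hGanal : AnalyticOnNhd ℂ G Set.univ := by
    rw [hG_def, Complex.analyticOnNhd_univ_iff_differentiable]
    exact hIntDiff.const_mul _
  set f : ℂ → ℂ := fun t => A (fun i => u i + t * v i,
    fun i => (starRingEnd ℂ) (u i) + t * (starRingEnd ℂ) (v i)) with hf_def
  have hfanal : AnalyticOnNhd ℂ f Set.univ := by
    rw [hf_def, Complex.analyticOnNhd_univ_iff_differentiable]
    apply hAdiff.comp
    apply Differentiable.prodMk
    · exact differentiable_pi.mpr fun i => (differentiable_id.mul_const _).const_add _
    · exact differentiable_pi.mpr fun i => (differentiable_id.mul_const _).const_add _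
  -- agreement on the reals
  have hrealeq : ∀ τ : ℝ, f (↑τ) = G (↑τ) := by
    intro τ
    set p : Fin d → ℂ := fun i => u i + (τ:ℂ) * v i with hp_def
    have e2 : (fun i => (starRingEnd ℂ) (u i) + (τ:ℂ) * (starRingEnd ℂ) (v i))
        = fun i => (starRingEnd ℂ) (p i) := by
      funext i
      show (starRingEnd ℂ) (u i) + (τ:ℂ) * (starRingEnd ℂ) (v i)
        = (starRingEnd ℂ) (u i + (τ:ℂ) * v i)
      simp [map_add, map_mul, Complex.conj_ofReal]
    have h1 : f (↑τ) = aaw p p := by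
      rw [hArep p p]
      show A (p, fun i => (starRingEnd ℂ) (u i) + (τ:ℂ) * (starRingEnd ℂ) (v i))
        = A (p, fun i => (starRingEnd ℂ) (p i))
      rw [e2]
    have h2 : ∀ x : Fin d → ℂ, F (↑τ) x = a x x * (Real.exp (-(nsq (p - x))) : ℂ) := by
      intro x
      have h3 : ph u v (↑τ) x = ((nsq (p - x) : ℝ) : ℂ) := by
        rw [ph_real u v τ x]
        rfl
      show a x x * Complex.exp (-ph u v (↑τ) x) = a x x * (Real.exp (-(nsq (p - x))) : ℂ)
      rw [h3, ← Complex.ofReal_neg, ← Complex.ofReal_exp]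
    have h4 : G (↑τ) = aaw p p := by
      rw [(hint p).2]
      show ((Real.pi : ℂ) ^ d)⁻¹ * ∫ x : Fin d → ℂ, F (↑τ) x
        = ((Real.pi : ℂ) ^ d)⁻¹ * ∫ w₁ : Fin d → ℂ, a w₁ w₁ * (Real.exp (-(nsq (p - w₁))) : ℂ)
      congr 1
      exact integral_congr_ae (Filter.Eventually.of_forall fun x => h2 x)
    rw [h1, h4]
  -- identity theorem
  have hfreq : ∃ᶠ t in nhdsWithin (0:ℂ) {(0:ℂ)}ᶜ, f t = G t := by
    rw [Filter.frequently_iff]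
    intro U hU
    rcases Metric.mem_nhdsWithin_iff.1 hU with ⟨ε, hε, hsub⟩
    refine ⟨((ε/2 : ℝ) : ℂ), hsub ⟨?_, ?_⟩, hrealeq (ε/2)⟩
    · rw [Metric.mem_ball, Complex.dist_eq]
      simp only [sub_zero, Complex.norm_real, Real.norm_eq_abs]
      rw [abs_of_pos (by linarith)]
      linarith
    · simp only [Set.mem_compl_iff, Set.mem_singleton_iff]
      intro hcon
      rw [Complex.ofReal_eq_zero] at hcon
      linarith
  have hfG : f = G := hfanal.eq_of_frequently_eq hGanal hfreq
  -- evaluation at I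
  have hval : aaw z w = G Complex.I := by
    have e1 : (fun i => u i + Complex.I * v i) = z := by
      funext i
      rw [hu_def, hv_def]
      exact scalar1 (z i) (w i)
    have e2 : (fun i => (starRingEnd ℂ) (u i) + Complex.I * (starRingEnd ℂ) (v i))
        = fun i => (starRingEnd ℂ) (w i) := by
      funext i
      rw [hu_def, hv_def]
      exact scalar2 (z i) (w i)
    calc aaw z w = A (z, fun i => (starRingEnd ℂ) (w i)) := hArep z w
      _ = f Complex.I := by
          show A (z, fun i => (starRingEnd ℂ) (w i))
            = A (fun i => u i + Complex.I * v i,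
                fun i => (starRingEnd ℂ) (u i) + Complex.I * (starRingEnd ℂ) (v i))
          rw [e1, e2]
      _ = G Complex.I := by rw [hfG]
  -- final estimate
  set su : Fin d → ℂ := fun i => 2 * u i with hsu_def
  have hFIbound : ∀ x : Fin d → ℂ, ‖F Complex.I x‖
      ≤ (C * rexp (nsq v - nsq u)) * rexp (-((1 - r) * nsq x) + (herm x su).re) := by
    intro x
    have hnorm : ‖F Complex.I x‖ = ‖a x x‖ * rexp (-(ph u v Complex.I x).re) := by
      rw [hF_def]
      simp only [norm_mul, Complex.norm_exp, Complex.neg_re]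
    rw [hnorm, ph_I_re]
    have e1 : ‖a x x‖ ≤ C * rexp (r * nsq x) := hCb x
    calc ‖a x x‖ * rexp (-(al u x - nsq v))
        ≤ (C * rexp (r * nsq x)) * rexp (-(al u x - nsq v)) := by
          apply mul_le_mul_of_nonneg_right e1 (Real.exp_pos _).le
      _ = (C * rexp (nsq v - nsq u)) * rexp (-((1 - r) * nsq x) + (herm x su).re) := by
          rw [mul_assoc, ← Real.exp_add, mul_assoc, ← Real.exp_add]
          congr 2
          have hae := al_expand u x
          have hh2 : (herm x su).re = 2 * (herm x u).re := by
            rw [hsu_def]; exact herm_two u x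
          rw [hh2]
          linarith
  have hbint2 : Integrable (fun x : Fin d → ℂ =>
      (C * rexp (nsq v - nsq u)) * rexp (-((1 - r) * nsq x) + (herm x su).re)) :=
    (gaussPi_integrable h1r su).const_mul _
  have hIbound : ‖∫ x : Fin d → ℂ, F Complex.I x‖
      ≤ (C * rexp (nsq v - nsq u)) * ((π / (1 - r)) ^ d * rexp (nsq su / (4 * (1 - r)))) := by
    have h := norm_integral_le_of_norm_le hbint2
      (Filter.Eventually.of_forall hFIbound)
    rw [integral_const_mul, gaussPi_integral h1r su] at h
    exact h
  -- put everything together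
  rw [hval]
  have hGnorm : ‖G Complex.I‖
      ≤ (Real.pi ^ d)⁻¹ * ((C * rexp (nsq v - nsq u))
        * ((π / (1 - r)) ^ d * rexp (nsq su / (4 * (1 - r))))) := by
    rw [hG_def]
    simp only [norm_mul, norm_inv, norm_pow, Complex.norm_real, Real.norm_eq_abs,
      abs_of_pos Real.pi_pos]
    apply mul_le_mul_of_nonneg_left _ (by positivity)
    exact hIbound
  refine le_trans hGnorm (le_of_eq ?_)
  -- now a purely real computation
  have hsu4 : nsq su = 4 * nsq u := by rw [hsu_def]; exact nsq_two u
  have hUval : nsq u = nsq (z + w) / 4 := by rw [hu_def]; exact nsq_half_add z w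
  have hVval : nsq v = nsq (z - w) / 4 := by rw [hv_def]; exact nsq_half_sub z w
  have hpol := polar z w
  have hexp2 : (nsq v - nsq u) + nsq su / (4 * (1 - r))
      = 1 / (4 * (1 - r)) * nsq (z + w) - (herm z w).re := by
    rw [hsu4, hUval, hVval, hpol]
    field_simp
    ring
  have hconst : (Real.pi ^ d)⁻¹ * (π / (1 - r)) ^ d = (1:ℝ) / (1 - r) ^ d := by
    rw [div_pow]
    field_simp
  calc (Real.pi ^ d)⁻¹ * ((C * rexp (nsq v - nsq u))
        * ((π / (1 - r)) ^ d * rexp (nsq su / (4 * (1 - r)))))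
      = ((Real.pi ^ d)⁻¹ * (π / (1 - r)) ^ d) * C
        * (rexp (nsq v - nsq u) * rexp (nsq su / (4 * (1 - r)))) := by ring
    _ = C / (1 - r) ^ d
        * Real.exp (1 / (4 * (1 - r)) * nsq (z + w) - (herm z w).re) := by
        rw [hconst, ← Real.exp_add, hexp2]
        ring



end
end

section
/- Let d ≥ 1, s ≥ 1/2, 0 < t₀ < 3/4 and set t₁ = (1−t₀)/(3−4t₀). Suppose b : ℂ^d × ℂ^d → ℂ is wideparen-entire and satisfies: for every r > 0 there is C_r > 0 with |b(z,w)| ≤ C_r e^{(1/4)|z−w|² + r|z+w|^{1/s}} for all z, w. Suppose F : ℂ^d → ℂ is entire and satisfies: for every r > 0 there is C_r > 0 with |F(z)| ≤ C_r e^{t₀|z|² + r|z|^{1/s}} for all z. Then for every z ∈ ℂ^d the integral G(z) := π^{−d} ∫_{ℂ^d} b(z,w) F(w) e^{(z,w) − |w|²} dλ(w) (the Wick operator Op_𝔙(b) applied to F) converges absolutely, and for every r > 0 there is C'_r > 0 such that |G(z)| ≤ C'_r e^{t₁|z|² + r|z|^{1/s}} for all z ∈ ℂ^d. -/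
open Finset MeasureTheory

noncomputable section

/-! ### Auxiliary lemmas -/

lemma nsq_nonneg {d : ℕ} (z : Fin d → ℂ) : 0 ≤ nsq z :=
  Finset.sum_nonneg fun i _ => Complex.normSq_nonneg _

lemma continuous_nsq {d : ℕ} : Continuous (nsq (d := d)) := by
  unfold nsq
  exact continuous_finset_sum _ fun i _ => Complex.continuous_normSq.comp (continuous_apply i)

lemma continuous_herm {d : ℕ} (z : Fin d → ℂ) : Continuous (fun w => herm z w) := by
  unfold herm
  exact continuous_finset_sum _ fun i _ =>
    continuous_const.mul (Complex.continuous_conj.comp (continuous_apply i))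

lemma norm_le_sqrt_nsq {d : ℕ} (w : Fin d → ℂ) : ‖w‖ ≤ Real.sqrt (nsq w) := by
  rcases Nat.eq_zero_or_pos d with h | h
  · subst h
    have : w = 0 := Subsingleton.elim _ _
    rw [this, norm_zero]
    exact Real.sqrt_nonneg _
  rw [pi_norm_le_iff_of_nonneg (Real.sqrt_nonneg _)]
  intro i
  rw [Complex.norm_def]
  exact Real.sqrt_le_sqrt (Finset.single_le_sum (fun j _ => Complex.normSq_nonneg (w j)) (Finset.mem_univ i))

lemma nsq_eq_norm {d : ℕ} (z : Fin d → ℂ) :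
    Real.sqrt (nsq z) = ‖(WithLp.equiv 2 (Fin d → ℂ)).symm z‖ := by
  rw [EuclideanSpace.norm_eq]
  congr 1
  unfold nsq
  congr 1
  ext i
  simp [WithLp.equiv, Complex.normSq_eq_norm_sq]

lemma herm_eq_inner {d : ℕ} (z w : Fin d → ℂ) :
    herm z w = @inner ℂ _ _ ((WithLp.equiv 2 (Fin d → ℂ)).symm w) ((WithLp.equiv 2 (Fin d → ℂ)).symm z) := by
  rw [PiLp.inner_apply]
  unfold herm
  congr 1

lemma sqrt_nsq_add {d : ℕ} (z w : Fin d → ℂ) :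
    Real.sqrt (nsq (z + w)) ≤ Real.sqrt (nsq z) + Real.sqrt (nsq w) := by
  rw [nsq_eq_norm, nsq_eq_norm, nsq_eq_norm]
  exact norm_add_le _ _

lemma re_herm_le {d : ℕ} (z w : Fin d → ℂ) :
    (herm z w).re ≤ Real.sqrt (nsq z) * Real.sqrt (nsq w) := by
  rw [nsq_eq_norm, nsq_eq_norm, herm_eq_inner]
  calc (inner ℂ _ _ : ℂ).re ≤ ‖(inner ℂ _ _ : ℂ)‖ := Complex.re_le_norm _
    _ ≤ _ := by
      exact (norm_inner_le_norm _ _).trans (by rw [mul_comm])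

lemma nsq_sub_expand {d : ℕ} (z w : Fin d → ℂ) :
    nsq (z - w) = nsq z - 2 * (herm z w).re + nsq w := by
  unfold nsq herm
  rw [Complex.re_sum]
  have h : ∀ i, Complex.normSq (z i - w i) =
      Complex.normSq (z i) + Complex.normSq (w i) - 2 * (z i * (starRingEnd ℂ) (w i)).re :=
    fun i => Complex.normSq_sub (z i) (w i)
  have h2 : ∀ i : Fin d, Complex.normSq ((z - w) i) = Complex.normSq (z i - w i) := fun i => rfl
  simp_rw [h2, h]
  rw [Finset.sum_sub_distrib, Finset.sum_add_distrib, ← Finset.mul_sum]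
  ring

/-! ### Gaussian integrability -/

lemma gauss_c {β : ℝ} (hβ : 0 < β) : Integrable (fun z : ℂ => Real.exp (-β * Complex.normSq z)) := by
  have h1 : Integrable (fun p : ℝ × ℝ => Real.exp (-β * p.1^2) * Real.exp (-β * p.2^2)) :=
    (integrable_exp_neg_mul_sq hβ).mul_prod (integrable_exp_neg_mul_sq hβ)
  have h2 := (MeasurePreserving.symm _ Complex.volume_preserving_equiv_real_prod).integrable_comp_emb
    Complex.measurableEquivRealProd.symm.measurableEmbedding
    (g := fun z : ℂ => Real.exp (-β * Complex.normSq z))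
  rw [← h2]
  apply h1.congr
  filter_upwards with p
  simp only [Function.comp_apply, Complex.measurableEquivRealProd_symm_apply,
    Complex.normSq_apply, ← Real.exp_add]
  ring_nf

lemma gauss_pi {d : ℕ} {β : ℝ} (hβ : 0 < β) :
    Integrable (fun w : Fin d → ℂ => Real.exp (-β * nsq w)) := by
  have : ∀ w : Fin d → ℂ, Real.exp (-β * nsq w) = ∏ i, Real.exp (-β * Complex.normSq (w i)) := by
    intro w
    rw [← Real.exp_sum]
    congr 1
    simp [nsq, Finset.mul_sum]
  simp_rw [this]
  exact Integrable.fintype_prod (fun i => gauss_c hβ)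

lemma shifted_gauss {d : ℕ} {β R : ℝ} (hβ : 0 < β) (hR : 0 ≤ R) :
    Integrable (fun w : Fin d → ℂ => Real.exp (-β * (Real.sqrt (nsq w) - R)^2)) ∧
    ∫ w : Fin d → ℂ, Real.exp (-β * (Real.sqrt (nsq w) - R)^2) ≤
      (volume (Metric.closedBall (0 : Fin d → ℂ) (2*R))).toReal +
      ∫ w : Fin d → ℂ, Real.exp (-(β/4) * nsq w) := by
  set f : (Fin d → ℂ) → ℝ := fun w => Real.exp (-β * (Real.sqrt (nsq w) - R)^2) with hf
  set g : (Fin d → ℂ) → ℝ := fun w =>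
    Set.indicator (Metric.closedBall (0 : Fin d → ℂ) (2*R)) (fun _ => (1:ℝ)) w
      + Real.exp (-(β/4) * nsq w) with hg
  have hfg : ∀ w, f w ≤ g w := by
    intro w
    by_cases hw : Real.sqrt (nsq w) ≤ 2*R
    · have hmem : w ∈ Metric.closedBall (0 : Fin d → ℂ) (2*R) := by
        rw [Metric.mem_closedBall, dist_zero_right]
        exact (norm_le_sqrt_nsq w).trans hw
      have : f w ≤ 1 := by
        rw [hf]
        apply Real.exp_le_one_iff.2
        nlinarith [sq_nonneg (Real.sqrt (nsq w) - R)]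
      simpa [hg, Set.indicator_of_mem hmem] using
        le_add_of_le_of_nonneg this (Real.exp_nonneg _)
    · push_neg at hw
      have h1 : Real.sqrt (nsq w) - R ≥ Real.sqrt (nsq w) / 2 := by linarith
      have h2 : (Real.sqrt (nsq w) - R)^2 ≥ nsq w / 4 := by
        have hs : Real.sqrt (nsq w) ^ 2 = nsq w := Real.sq_sqrt (nsq_nonneg w)
        nlinarith [Real.sqrt_nonneg (nsq w)]
      have : f w ≤ Real.exp (-(β/4) * nsq w) := by
        apply Real.exp_le_exp.2
        nlinarith
      calc f w ≤ Real.exp (-(β/4) * nsq w) := this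
        _ ≤ g w := le_add_of_nonneg_of_le (Set.indicator_nonneg (by simp) _) le_rfl
  have hcont : Continuous f := by
    exact Real.continuous_exp.comp (continuous_const.mul
      (((Real.continuous_sqrt.comp continuous_nsq).sub continuous_const).pow 2))
  have hgi : Integrable g := by
    apply Integrable.add
    · rw [integrable_indicator_iff measurableSet_closedBall]
      exact integrableOn_const measure_closedBall_lt_top.ne
    · exact gauss_pi (by linarith)
  have hfi : Integrable f := by
    apply Integrable.mono' hgi hcont.aestronglyMeasurable
    filter_upwards with w
    rw [Real.norm_of_nonneg (Real.exp_nonneg _)]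
    exact hfg w
  refine ⟨hfi, ?_⟩
  calc ∫ w, f w ≤ ∫ w, g w := integral_mono hfi hgi hfg
    _ = _ := by
        rw [hg, integral_add ?_ (gauss_pi (by linarith))]
        · congr 1
          rw [integral_indicator_const (1:ℝ) measurableSet_closedBall]
          simp
          rfl
        · rw [integrable_indicator_iff measurableSet_closedBall]
          exact integrableOn_const measure_closedBall_lt_top.ne

/-! ### Elementary real estimates -/

lemma poly_exp {δ p : ℝ} (hδ : 0 < δ) (hp : 0 < p) (n : ℕ) :
    ∃ C > (0:ℝ), ∀ X ≥ (0:ℝ), X ^ n ≤ C * Real.exp (δ * X ^ p) := by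
  set m : ℕ := ⌈(n:ℝ)/p⌉₊ with hm
  refine ⟨max 1 (m.factorial / δ^m), lt_of_lt_of_le one_pos (le_max_left _ _), fun X hX => ?_⟩
  have hexp1 : (1:ℝ) ≤ Real.exp (δ * X ^ p) := by
    rw [Real.one_le_exp_iff]
    positivity
  rcases le_or_gt X 1 with h1 | h1
  · calc X ^ n ≤ 1 := pow_le_one₀ hX h1
      _ ≤ max 1 (m.factorial / δ^m) * Real.exp (δ * X ^ p) :=
        one_le_mul_of_one_le_of_one_le (le_max_left _ _) hexp1
  · have hXp : (0:ℝ) ≤ X ^ p := Real.rpow_nonneg hX p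
    have key : X ^ n ≤ (X ^ p) ^ m := by
      have h2 : X ^ n = X ^ ((n:ℝ)) := (Real.rpow_natCast X n).symm
      have h3 : (X ^ p) ^ m = X ^ (p * m) := by
        rw [← Real.rpow_natCast (X ^ p) m, ← Real.rpow_mul hX]
      rw [h2, h3]
      apply Real.rpow_le_rpow_of_exponent_le h1.le
      have : (n:ℝ)/p ≤ m := Nat.le_ceil _
      calc (n:ℝ) = ((n:ℝ)/p) * p := by field_simp
        _ ≤ m * p := by nlinarith
        _ = p * m := by ring
    have key2 : (X ^ p) ^ m ≤ (m.factorial / δ^m) * Real.exp (δ * X ^ p) := by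
      have := Real.pow_div_factorial_le_exp (x := δ * X ^ p) (by positivity) m
      rw [mul_pow] at this
      have hfac : (0:ℝ) < m.factorial := by positivity
      have hδm : (0:ℝ) < δ ^ m := by positivity
      rw [div_le_iff₀ hfac] at this
      calc (X ^ p) ^ m = (δ^m * (X^p)^m) / δ^m := by field_simp
        _ ≤ (Real.exp (δ * X^p) * m.factorial) / δ^m := by gcongr
        _ = (m.factorial / δ^m) * Real.exp (δ * X ^ p) := by ring
    calc X ^ n ≤ (X ^ p) ^ m := key
      _ ≤ (m.factorial / δ^m) * Real.exp (δ * X ^ p) := key2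
      _ ≤ max 1 (m.factorial / δ^m) * Real.exp (δ * X ^ p) := by
          apply mul_le_mul_of_nonneg_right (le_max_right _ _) (Real.exp_nonneg _)

lemma rpow4 {p : ℝ} (hp : 0 < p) (hp2 : p ≤ 2) {x y : ℝ} (hx : 0 ≤ x) (hy : 0 ≤ y) :
    (x + y) ^ p ≤ 4 * (x ^ p + y ^ p) := by
  have hmax : x + y ≤ 2 * max x y := by
    rcases max_cases x y with ⟨h, _⟩ | ⟨h, _⟩ <;> rw [h] <;> linarith [le_max_left x y, le_max_right x y, h]
  have h0 : (0:ℝ) ≤ max x y := le_trans hx (le_max_left _ _)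
  calc (x + y) ^ p ≤ (2 * max x y) ^ p := Real.rpow_le_rpow (by linarith) hmax hp.le
    _ = 2 ^ p * (max x y) ^ p := Real.mul_rpow (by norm_num) h0
    _ ≤ 4 * (max x y) ^ p := by
        apply mul_le_mul_of_nonneg_right ?_ (Real.rpow_nonneg h0 p)
        calc (2:ℝ) ^ p ≤ 2 ^ (2:ℝ) := Real.rpow_le_rpow_of_exponent_le (by norm_num) hp2
          _ = 4 := by
              rw [Real.rpow_two]
              norm_num
    _ ≤ 4 * (x ^ p + y ^ p) := by
        apply mul_le_mul_of_nonneg_left ?_ (by norm_num)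
        rcases max_cases x y with ⟨h, _⟩ | ⟨h, _⟩ <;> rw [h]
        · exact le_add_of_le_of_nonneg le_rfl (Real.rpow_nonneg hy p)
        · exact le_add_of_nonneg_of_le (Real.rpow_nonneg hx p) le_rfl

lemma upow {p : ℝ} (hp : 0 < p) (hp2 : p ≤ 2) {u : ℝ} (hu : 0 ≤ u) :
    u ^ p ≤ u ^ (2:ℕ) + 1 := by
  rcases le_or_gt u 1 with h | h
  · have : u ^ p ≤ 1 := Real.rpow_le_one hu h hp.le
    nlinarith [sq_nonneg u]
  · have : u ^ p ≤ u ^ (2:ℝ) := Real.rpow_le_rpow_of_exponent_le h.le hp2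
    rw [Real.rpow_two] at this
    nlinarith

set_option maxHeartbeats 1000000 in
lemma exponent_key {t₀ r r' p X Y h : ℝ}
    (ht₀ : 0 < t₀) (ht₀' : t₀ < 3/4) (hp : 0 < p) (hp2 : p ≤ 2)
    (hX : 0 ≤ X) (hY : 0 ≤ Y) (hh : h ≤ X * Y) (hr' : 0 < r')
    (hc1 : 8 * r' * (1 + 1/(4*(3/4 - t₀))) ^ p ≤ r / 2)
    (hc2 : 16 * r' ≤ 3/4 - t₀) :
    (1/4) * (X^2 - 2*h + Y^2) + r' * (X + Y) ^ p + t₀ * Y^2 + r' * Y ^ p + h - Y^2 ≤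
      (1 - t₀)/(3 - 4*t₀) * X^2 + (r/2) * X ^ p + (3/4 - t₀)/2
        - ((3/4 - t₀)/2) * (Y - (1/(4*(3/4 - t₀))) * X)^2 := by
  set a : ℝ := 3/4 - t₀ with ha_def
  clear_value a
  have ha : 0 < a := by rw [ha_def]; linarith
  set c : ℝ := 1/(4*a) with hc_def
  clear_value c
  have hc : 0 < c := by rw [hc_def]; positivity
  set u : ℝ := |Y - c * X| with hu_def
  clear_value u
  have hu : 0 ≤ u := by rw [hu_def]; exact abs_nonneg _
  have hu2 : u ^ 2 = (Y - c*X)^2 := by rw [hu_def]; exact sq_abs _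
  have hYle : Y ≤ c * X + u := by
    have h' := le_abs_self (Y - c*X)
    rw [← hu_def] at h'
    linarith
  have ht₁ : (1 - t₀)/(3 - 4*t₀) = 1/4 + 1/(16*a) := by
    have hne1 : (3 - 4*t₀) ≠ 0 := by linarith
    have hne2 : (3/4 - t₀) ≠ 0 := by linarith
    rw [ha_def]
    rw [show (16:ℝ)*(3/4 - t₀) = 4*(3 - 4*t₀) by ring]
    rw [div_add_div _ _ (by norm_num) (mul_ne_zero four_ne_zero hne1),
      div_eq_div_iff hne1 (mul_ne_zero four_ne_zero (mul_ne_zero four_ne_zero hne1))]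
    ring
  have hquad : (1/4) * X^2 + (1/2) * h + (t₀ - 3/4) * Y^2 ≤
      (1 - t₀)/(3 - 4*t₀) * X^2 - a * (Y - c*X)^2 := by
    rw [ht₁]
    have hXY : (1/2) * h ≤ (1/2) * (X * Y) := by linarith
    have hac : a * c = 1/4 := by rw [hc_def]; field_simp
    have hid : (1/4) * X^2 + (1/2) * (X*Y) + (t₀ - 3/4) * Y^2 =
        (1/4 + 1/(16*a)) * X^2 - a * (Y - c*X)^2 := by
      have hc2' : a * c^2 = 1/(16*a) := by
        rw [hc_def]; rw [div_pow]; field_simp; ring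
      have : a * (Y - c*X)^2 = a*Y^2 - 2*(a*c)*(X*Y) + (a*c^2)*X^2 := by ring
      rw [this, hac, hc2']
      simp only [ha_def]
      ring
    linarith
  have hXYu : X + Y ≤ (1 + c) * X + u := by nlinarith
  have h1c : (0:ℝ) ≤ (1+c) * X + u := by positivity
  have hr1 : (X + Y) ^ p ≤ ((1+c)*X + u) ^ p :=
    Real.rpow_le_rpow (by positivity) hXYu hp.le
  have hr2 : Y ^ p ≤ ((1+c)*X + u) ^ p :=
    Real.rpow_le_rpow hY (by nlinarith) hp.le
  have hr3 : ((1+c)*X + u) ^ p ≤ 4 * (((1+c)*X) ^ p + u ^ p) :=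
    rpow4 hp hp2 (by positivity) hu
  have hr4 : ((1+c)*X) ^ p = (1+c) ^ p * X ^ p := Real.mul_rpow (by positivity) hX
  have hr5 : u ^ p ≤ u ^ (2:ℕ) + 1 := upow hp hp2 hu
  have hrsum : r' * (X + Y) ^ p + r' * Y ^ p ≤
      8 * r' * (1+c) ^ p * X ^ p + 8 * r' * (u^(2:ℕ) + 1) := by
    rw [hr4] at hr3
    have e0 : r' * (X + Y) ^ p ≤ r' * (((1+c)*X + u) ^ p) := mul_le_mul_of_nonneg_left hr1 hr'.le
    have e0' : r' * Y ^ p ≤ r' * (((1+c)*X + u) ^ p) := mul_le_mul_of_nonneg_left hr2 hr'.le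
    have e1 : r' * (((1+c)*X + u) ^ p) ≤ r' * (4 * ((1+c) ^ p * X ^ p + u ^ p)) :=
      mul_le_mul_of_nonneg_left hr3 hr'.le
    have e2 : r' * u ^ p ≤ r' * (u ^ (2:ℕ) + 1) := mul_le_mul_of_nonneg_left hr5 hr'.le
    linarith [e0, e0', e1, e2]
  have hfinal : 8 * r' * (1+c) ^ p * X ^ p + 8 * r' * (u^(2:ℕ) + 1) ≤
      (r/2) * X ^ p + (a/2) * (Y - c*X)^2 + a/2 := by
    have hXp : (0:ℝ) ≤ X ^ p := Real.rpow_nonneg hX p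
    have e2 : 8 * r' * (1+c) ^ p * X ^ p ≤ (r/2) * X ^ p :=
      mul_le_mul_of_nonneg_right hc1 hXp
    have e3 : 8 * r' * (u^(2:ℕ) + 1) ≤ (a/2) * (Y - c*X)^2 + a/2 := by
      rw [show (u:ℝ)^(2:ℕ) = u^2 by norm_num, hu2]
      have hint : (0:ℝ) ≤ (a - 16*r') * ((Y - c*X)^2 + 1) :=
        mul_nonneg (by linarith) (by positivity)
      nlinarith [hint]
    linarith
  linarith [hquad, hrsum, hfinal]

theorem stmt_15 (d : ℕ) (hd : 1 ≤ d) (s : ℝ) (hs : 1/2 ≤ s) (t₀ : ℝ)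
    (ht₀ : 0 < t₀) (ht₀' : t₀ < 3/4)
    (b : (Fin d → ℂ) → (Fin d → ℂ) → ℂ) (hb : WideparenEntire d b)
    (hbb : ∀ r > (0:ℝ), ∃ C > (0:ℝ), ∀ z w : Fin d → ℂ,
      ‖b z w‖ ≤
        C * Real.exp ((1/4) * nsq (z - w) + r * Real.sqrt (nsq (z + w)) ^ ((1:ℝ)/s)))
    (F : (Fin d → ℂ) → ℂ) (hF : AnalyticOnNhd ℂ F Set.univ)
    (hFb : ∀ r > (0:ℝ), ∃ C > (0:ℝ), ∀ z : Fin d → ℂ,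
      ‖F z‖ ≤
        C * Real.exp (t₀ * nsq z + r * Real.sqrt (nsq z) ^ ((1:ℝ)/s))) :
    (∀ z : Fin d → ℂ,
      Integrable (fun w : Fin d → ℂ =>
        b z w * F w * Complex.exp (herm z w - (nsq w : ℂ)))) ∧
    (∀ r > (0:ℝ), ∃ C' > (0:ℝ), ∀ z : Fin d → ℂ,
      ‖(((Real.pi : ℂ) ^ d)⁻¹ *
          ∫ w : Fin d → ℂ, b z w * F w * Complex.exp (herm z w - (nsq w : ℂ)))‖ ≤
        C' * Real.exp (((1 - t₀) / (3 - 4 * t₀)) * nsq z +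
          r * Real.sqrt (nsq z) ^ ((1:ℝ)/s))) := by
  have hs0 : 0 < s := lt_of_lt_of_le (by norm_num) hs
  set p : ℝ := (1:ℝ)/s with hp_def
  have hp : 0 < p := by positivity
  have hp2 : p ≤ 2 := by
    rw [hp_def, div_le_iff₀ hs0]
    linarith
  -- continuity of the integrand
  have hcont : ∀ z : Fin d → ℂ,
      Continuous (fun w : Fin d → ℂ => b z w * F w * Complex.exp (herm z w - (nsq w : ℂ))) := by
    intro z
    obtain ⟨A, hA, hAeq⟩ := hb
    have hAc : Continuous A := continuousOn_univ.1 hA.continuousOn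
    have hFc : Continuous F := continuousOn_univ.1 hF.continuousOn
    have h1 : Continuous (fun w : Fin d → ℂ => b z w) := by
      simp_rw [hAeq]
      exact hAc.comp (continuous_const.prodMk
        (continuous_pi fun i => Complex.continuous_conj.comp (continuous_apply i)))
    exact (h1.mul hFc).mul (Complex.continuous_exp.comp
      ((continuous_herm z).sub (Complex.continuous_ofReal.comp continuous_nsq)))
  -- constants
  set a : ℝ := 3/4 - t₀ with ha_def
  clear_value a
  have ha : 0 < a := by rw [ha_def]; linarith
  set c : ℝ := 1/(4*a) with hc_def
  clear_value c
  have hc : 0 < c := by rw [hc_def]; exact one_div_pos.2 (by linarith)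
  set t₁ : ℝ := (1 - t₀)/(3 - 4*t₀) with ht₁_def
  clear_value t₁
  -- the main estimate, for each r > 0
  have key : ∀ r > (0:ℝ),
      (∀ z : Fin d → ℂ, Integrable (fun w : Fin d → ℂ =>
        b z w * F w * Complex.exp (herm z w - (nsq w : ℂ)))) ∧
      (∃ C' > (0:ℝ), ∀ z : Fin d → ℂ,
        ‖(((Real.pi : ℂ) ^ d)⁻¹ *
            ∫ w : Fin d → ℂ, b z w * F w * Complex.exp (herm z w - (nsq w : ℂ)))‖ ≤
          C' * Real.exp (t₁ * nsq z + r * Real.sqrt (nsq z) ^ p)) := by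
    intro r hr
    have hcp : (0:ℝ) < (1+c)^p := Real.rpow_pos_of_pos (by linarith) p
    set r' : ℝ := min (r/(16*(1+c)^p)) (a/16) with hr'_def
    have hm1 : r' ≤ r/(16*(1+c)^p) := min_le_left _ _
    have hm2 : r' ≤ a/16 := min_le_right _ _
    have hr' : 0 < r' := lt_min (div_pos hr (mul_pos (by norm_num) hcp)) (by linarith)
    clear_value r'
    have hc1 : 8 * r' * (1+c)^p ≤ r/2 := by
      calc 8 * r' * (1+c)^p ≤ 8 * (r/(16*(1+c)^p)) * (1+c)^p := by
            apply mul_le_mul_of_nonneg_right ?_ hcp.le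
            linarith
        _ = r/2 := by
            field_simp
            ring
    have hc2 : 16 * r' ≤ a := by linarith
    obtain ⟨Cb, hCb, hCbb⟩ := hbb r' hr'
    obtain ⟨CF, hCF, hCFb⟩ := hFb r' hr'
    -- pointwise bound
    set M : (Fin d → ℂ) → ℝ := fun z =>
      Cb * CF * Real.exp (t₁ * nsq z + (r/2) * Real.sqrt (nsq z) ^ p + a/2) with hM_def
    have hMpos : ∀ z, 0 < M z := fun z =>
      mul_pos (mul_pos hCb hCF) (Real.exp_pos _)
    have hptwise : ∀ z w : Fin d → ℂ,
        ‖b z w * F w * Complex.exp (herm z w - (nsq w : ℂ))‖ ≤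
          M z * Real.exp (-(a/2) * (Real.sqrt (nsq w) - c * Real.sqrt (nsq z))^2) := by
      intro z w
      set X : ℝ := Real.sqrt (nsq z) with hX_def
      set Y : ℝ := Real.sqrt (nsq w) with hY_def
      have hX : 0 ≤ X := Real.sqrt_nonneg _
      have hY : 0 ≤ Y := Real.sqrt_nonneg _
      have hX2 : X^2 = nsq z := Real.sq_sqrt (nsq_nonneg z)
      have hY2 : Y^2 = nsq w := Real.sq_sqrt (nsq_nonneg w)
      have habs : ‖b z w * F w * Complex.exp (herm z w - (nsq w : ℂ))‖ =
          ‖b z w‖ * ‖F w‖ * Real.exp ((herm z w).re - nsq w) := by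
        rw [norm_mul, norm_mul, Complex.norm_exp]
        congr 2
      rw [habs]
      have hexp_b := hCbb z w
      have hexp_F := hCFb w
      have step1 : ‖b z w‖ * ‖F w‖ * Real.exp ((herm z w).re - nsq w) ≤
          Cb * CF * Real.exp ((1/4) * nsq (z-w) + r' * Real.sqrt (nsq (z+w)) ^ p
            + t₀ * nsq w + r' * Y ^ p + (herm z w).re - nsq w) := by
        have e1 : ‖b z w‖ * ‖F w‖ ≤
            (Cb * Real.exp ((1/4) * nsq (z - w) + r' * Real.sqrt (nsq (z + w)) ^ p)) *
            (CF * Real.exp (t₀ * nsq w + r' * Y ^ p)) :=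
          mul_le_mul hexp_b hexp_F (norm_nonneg _)
            (mul_nonneg hCb.le (Real.exp_nonneg _))
        calc ‖b z w‖ * ‖F w‖ * Real.exp ((herm z w).re - nsq w)
            ≤ ((Cb * Real.exp ((1/4) * nsq (z - w) + r' * Real.sqrt (nsq (z + w)) ^ p)) *
              (CF * Real.exp (t₀ * nsq w + r' * Y ^ p))) * Real.exp ((herm z w).re - nsq w) :=
              mul_le_mul_of_nonneg_right e1 (Real.exp_nonneg _)
          _ = Cb * CF * Real.exp ((1/4) * nsq (z-w) + r' * Real.sqrt (nsq (z+w)) ^ p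
              + t₀ * nsq w + r' * Y ^ p + (herm z w).re - nsq w) := by
              simp only [Real.exp_add, Real.exp_sub]
              ring
      have step2 : (1/4) * nsq (z-w) + r' * Real.sqrt (nsq (z+w)) ^ p
          + t₀ * nsq w + r' * Y ^ p + (herm z w).re - nsq w ≤
          t₁ * nsq z + (r/2) * X ^ p + a/2 - (a/2) * (Y - c * X)^2 := by
        have hh : (herm z w).re ≤ X * Y := re_herm_le z w
        have e2 : nsq (z - w) = X^2 - 2*(herm z w).re + Y^2 := by
          rw [nsq_sub_expand, hX2, hY2]
        have e3 : r' * Real.sqrt (nsq (z+w)) ^ p ≤ r' * (X + Y) ^ p := by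
          apply mul_le_mul_of_nonneg_left ?_ hr'.le
          exact Real.rpow_le_rpow (Real.sqrt_nonneg _) (sqrt_nsq_add z w) hp.le
        have ekey := exponent_key (r := r) (h := (herm z w).re) ht₀ ht₀' hp hp2 hX hY hh hr' ?_ ?_
        · calc (1/4) * nsq (z-w) + r' * Real.sqrt (nsq (z+w)) ^ p
              + t₀ * nsq w + r' * Y ^ p + (herm z w).re - nsq w
              ≤ (1/4) * (X^2 - 2*(herm z w).re + Y^2) + r' * (X + Y) ^ p
                  + t₀ * Y^2 + r' * Y ^ p + (herm z w).re - Y^2 := by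
                rw [e2, ← hY2]
                linarith [e3]
            _ ≤ (1 - t₀)/(3 - 4*t₀) * X^2 + (r/2) * X ^ p + (3/4 - t₀)/2
                - ((3/4 - t₀)/2) * (Y - (1/(4*(3/4 - t₀))) * X)^2 := ekey
            _ = t₁ * nsq z + (r/2) * X ^ p + a/2 - (a/2) * (Y - c * X)^2 := by
                rw [← ha_def, ← hc_def, ← ht₁_def, hX2]
        · rw [← ha_def, ← hc_def]
          exact hc1
        · rw [← ha_def]
          exact hc2
      calc ‖b z w‖ * ‖F w‖ * Real.exp ((herm z w).re - nsq w)
          ≤ Cb * CF * Real.exp (t₁ * nsq z + (r/2) * X ^ p + a/2 - (a/2) * (Y - c * X)^2) :=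
            step1.trans (by
              apply mul_le_mul_of_nonneg_left (Real.exp_le_exp.2 step2)
                (mul_nonneg hCb.le hCF.le))
        _ = M z * Real.exp (-(a/2) * (Y - c * X)^2) := by
            rw [hM_def]
            rw [show t₁ * nsq z + (r/2) * X ^ p + a/2 - (a/2) * (Y - c * X)^2 =
              (t₁ * nsq z + (r/2) * X ^ p + a/2) + (-(a/2) * (Y - c * X)^2) by ring,
              Real.exp_add]
            ring
    -- integrability
    have ha2 : (0:ℝ) < a/2 := by linarith
    have hdom : ∀ z : Fin d → ℂ, Integrable (fun w : Fin d → ℂ =>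
        M z * Real.exp (-(a/2) * (Real.sqrt (nsq w) - c * Real.sqrt (nsq z))^2)) := by
      intro z
      exact ((shifted_gauss (d := d) (β := a/2) (R := c * Real.sqrt (nsq z))
        ha2 (mul_nonneg hc.le (Real.sqrt_nonneg _))).1).const_mul _
    have hint : ∀ z : Fin d → ℂ, Integrable (fun w : Fin d → ℂ =>
        b z w * F w * Complex.exp (herm z w - (nsq w : ℂ))) := by
      intro z
      exact Integrable.mono' (hdom z) (hcont z).aestronglyMeasurable
        (Filter.Eventually.of_forall (hptwise z))
    refine ⟨hint, ?_⟩
    -- the integral bound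
    set n : ℕ := Module.finrank ℝ (Fin d → ℂ) with hn_def
    set B : ℝ := (volume (Metric.ball (0 : Fin d → ℂ) 1)).toReal with hB_def
    have hB : 0 ≤ B := ENNReal.toReal_nonneg
    set Cg : ℝ := ∫ w : Fin d → ℂ, Real.exp (-(a/2/4) * nsq w) with hCg_def
    have hCg : 0 ≤ Cg := integral_nonneg fun w => Real.exp_nonneg _
    obtain ⟨C₁, hC₁, hC₁b⟩ := poly_exp (δ := r/2) (by linarith) hp n
    have h2c : (0:ℝ) ≤ (2*c)^n := pow_nonneg (by linarith) n
    set K : ℝ := (2*c)^n * C₁ * B + Cg + 1 with hK_def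
    have hK : 0 < K := by
      have h1 : (0:ℝ) ≤ (2*c)^n * C₁ * B := mul_nonneg (mul_nonneg h2c hC₁.le) hB
      rw [hK_def]; linarith
    have hπ : (0:ℝ) < Real.pi ^ d := pow_pos Real.pi_pos d
    set C' : ℝ := (Real.pi ^ d)⁻¹ * (Cb * CF * Real.exp (a/2)) * K with hC'_def
    have hC' : 0 < C' := by
      apply mul_pos (mul_pos (inv_pos.2 hπ) (mul_pos (mul_pos hCb hCF) (Real.exp_pos _))) hK
    refine ⟨C', hC', fun z => ?_⟩
    set X : ℝ := Real.sqrt (nsq z) with hX_def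
    have hX : 0 ≤ X := Real.sqrt_nonneg _
    set R : ℝ := c * X with hR_def
    have hR : 0 ≤ R := mul_nonneg hc.le hX
    have hshift := shifted_gauss (d := d) (β := a/2) (R := R) ha2 hR
    have habs_pi : ‖((Real.pi : ℂ) ^ d)⁻¹‖ = (Real.pi ^ d)⁻¹ := by
      rw [norm_inv, norm_pow, Complex.norm_real, Real.norm_of_nonneg Real.pi_pos.le]
    have hIb : ∫ w : Fin d → ℂ, Real.exp (-(a/2) * (Real.sqrt (nsq w) - R)^2) ≤
        (2*c)^n * X^n * B + Cg := by
      have hvol : (volume (Metric.closedBall (0 : Fin d → ℂ) (2*R))).toReal =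
          (2*R)^n * B := by
        rw [Measure.addHaar_closedBall _ _ (by linarith : (0:ℝ) ≤ 2*R),
          ENNReal.toReal_mul, ENNReal.toReal_ofReal (pow_nonneg (by linarith) _), hB_def, hn_def]
      calc _ ≤ (volume (Metric.closedBall (0 : Fin d → ℂ) (2*R))).toReal + Cg := hshift.2
        _ = (2*R)^n * B + Cg := by rw [hvol]
        _ = (2*c)^n * X^n * B + Cg := by
            rw [hR_def, show 2*(c*X) = (2*c)*X by ring, mul_pow]
    have hq1 : (1:ℝ) ≤ Real.exp ((r/2) * X ^ p) := by
      rw [Real.one_le_exp_iff]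
      exact mul_nonneg (by linarith) (Real.rpow_nonneg hX p)
    have hsum_le : (2*c)^n * X^n * B + Cg ≤ K * Real.exp ((r/2) * X ^ p) := by
      have t1 : (2*c)^n * X^n * B ≤ (2*c)^n * C₁ * B * Real.exp ((r/2) * X ^ p) := by
        calc (2*c)^n * X^n * B ≤ (2*c)^n * (C₁ * Real.exp ((r/2) * X ^ p)) * B := by
              apply mul_le_mul_of_nonneg_right ?_ hB
              exact mul_le_mul_of_nonneg_left (hC₁b X hX) h2c
          _ = (2*c)^n * C₁ * B * Real.exp ((r/2) * X ^ p) := by ring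
      have t2 : Cg ≤ Cg * Real.exp ((r/2) * X ^ p) := le_mul_of_one_le_right hCg hq1
      have t3 : (0:ℝ) ≤ Real.exp ((r/2) * X ^ p) := Real.exp_nonneg _
      rw [hK_def]
      linarith [t1, t2, t3]
    have hMz : M z = Cb * CF * Real.exp (t₁ * nsq z + (r/2) * X ^ p + a/2) := by
      rw [hM_def]
    have hexp_mul : Real.exp (t₁ * nsq z + (r/2) * X ^ p + a/2) * Real.exp ((r/2) * X ^ p) =
        Real.exp (a/2) * Real.exp (t₁ * nsq z + r * X ^ p) := by
      rw [← Real.exp_add, ← Real.exp_add]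
      congr 1
      ring
    calc ‖(((Real.pi : ℂ) ^ d)⁻¹ *
          ∫ w : Fin d → ℂ, b z w * F w * Complex.exp (herm z w - (nsq w : ℂ)))‖
        = (Real.pi ^ d)⁻¹ * ‖∫ w : Fin d → ℂ, b z w * F w * Complex.exp (herm z w - (nsq w : ℂ))‖ := by
          rw [norm_mul, habs_pi]
      _ ≤ (Real.pi ^ d)⁻¹ * ∫ w : Fin d → ℂ, ‖b z w * F w * Complex.exp (herm z w - (nsq w : ℂ))‖ := by
          apply mul_le_mul_of_nonneg_left (norm_integral_le_integral_norm _) (inv_nonneg.2 hπ.le)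
      _ ≤ (Real.pi ^ d)⁻¹ * ∫ w : Fin d → ℂ,
            M z * Real.exp (-(a/2) * (Real.sqrt (nsq w) - R)^2) := by
          apply mul_le_mul_of_nonneg_left ?_ (inv_nonneg.2 hπ.le)
          exact integral_mono (hint z).norm (hdom z) (hptwise z)
      _ = (Real.pi ^ d)⁻¹ * (M z * ∫ w : Fin d → ℂ,
            Real.exp (-(a/2) * (Real.sqrt (nsq w) - R)^2)) := by
          rw [integral_const_mul]
      _ ≤ (Real.pi ^ d)⁻¹ * (M z * ((2*c)^n * X^n * B + Cg)) := by
          apply mul_le_mul_of_nonneg_left ?_ (inv_nonneg.2 hπ.le)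
          exact mul_le_mul_of_nonneg_left hIb (hMpos z).le
      _ ≤ (Real.pi ^ d)⁻¹ * (M z * (K * Real.exp ((r/2) * X ^ p))) := by
          apply mul_le_mul_of_nonneg_left ?_ (inv_nonneg.2 hπ.le)
          exact mul_le_mul_of_nonneg_left hsum_le (hMpos z).le
      _ = C' * Real.exp (t₁ * nsq z + r * X ^ p) := by
          rw [hMz, hC'_def]
          rw [show Cb * CF * Real.exp (t₁ * nsq z + (r/2) * X ^ p + a/2) *
              (K * Real.exp ((r/2) * X ^ p)) =
              Cb * CF * K * (Real.exp (t₁ * nsq z + (r/2) * X ^ p + a/2) *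
                Real.exp ((r/2) * X ^ p)) from by ring, hexp_mul]
          ring
  refine ⟨fun z => ((key 1 one_pos).1 z), fun r hr => ?_⟩
  obtain ⟨C', hC', hbound⟩ := (key r hr).2
  exact ⟨C', hC', hbound⟩

end
end

section
/- Let d ≥ 1 and 0 < s < 1/2. Suppose c₁, c₂ : ℕ^d → ℂ satisfy: for each j ∈ {1,2} and every r > 0 there is C > 0 with |c_j(α)| ≤ C e^{r|α|^{1/(2s)}} for all α ∈ ℕ^d. Define c(α) = Σ_{γ ≤ α} C(α,γ)^{1/2} c₁(γ) c₂(α−γ). Then for every r > 0 there is C' > 0 with |c(α)| ≤ C' e^{r|α|^{1/(2s)}} for all α ∈ ℕ^d. (This says that the space 𝒜_s'(ℂ^d) of power series Σ c(α) z^α/√(α!) is closed under pointwise multiplication, since c is the coefficient sequence of the product of the series with coefficients c₁ and c₂.) -/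
open Finset

noncomputable section

/-- Coefficients of the product of two power series `Σ c_j(α) z^α/√(α!)`:
`c(α) = Σ_{γ ≤ α} C(α,γ)^{1/2} c₁(γ) c₂(α−γ)`. -/
def prodCoeff {d : ℕ} (c₁ c₂ : (Fin d → ℕ) → ℂ) : (Fin d → ℕ) → ℂ := fun α =>
  ∑ γ ∈ Finset.Iic α,
    ((Real.sqrt ((mchoose α γ : ℕ)) : ℝ) : ℂ) * c₁ γ * c₂ (α - γ)

lemma choose_le_two_pow' (n k : ℕ) : n.choose k ≤ 2 ^ n := by
  rcases le_or_gt k n with h | h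
  · calc n.choose k ≤ ∑ m ∈ Finset.range (n+1), n.choose m :=
        Finset.single_le_sum (fun _ _ => Nat.zero_le _)
          (Finset.mem_range.2 (Nat.lt_succ_of_le h))
    _ = 2 ^ n := Nat.sum_range_choose n
  · simp [Nat.choose_eq_zero_of_lt h]

lemma mchoose_le_two_pow {d : ℕ} (α γ : Fin d → ℕ) : mchoose α γ ≤ 2 ^ msize α := by
  unfold mchoose msize
  rw [← Finset.prod_pow_eq_pow_sum]
  exact Finset.prod_le_prod' fun i _ => choose_le_two_pow' _ _

lemma msize_add_msize_sub {d : ℕ} {γ α : Fin d → ℕ} (h : γ ≤ α) :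
    msize γ + msize (α - γ) = msize α := by
  unfold msize
  rw [← Finset.sum_add_distrib]
  exact Finset.sum_congr rfl fun i _ => by
    simp [Nat.add_sub_cancel' (h i)]

lemma rpow_add_rpow_le_rpow_real {x y p : ℝ} (hx : 0 ≤ x) (hy : 0 ≤ y) (hp : 1 ≤ p) :
    x ^ p + y ^ p ≤ (x + y) ^ p := by
  have := NNReal.add_rpow_le_rpow_add (⟨x, hx⟩ : NNReal) (⟨y, hy⟩ : NNReal) hp
  rw [← NNReal.coe_le_coe] at this
  push_cast [NNReal.coe_rpow] at this
  convert this using 2 <;> rfl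

lemma absorb (B r p : ℝ) (hB : 0 ≤ B) (hr : 0 < r) (hp : 1 < p) :
    ∃ K : ℝ, 0 ≤ K ∧ ∀ x : ℝ, 0 ≤ x → B * x ≤ r * x ^ p + K := by
  set x₀ : ℝ := (B / r) ^ (1 / (p - 1)) with hx₀
  have hbr : (0:ℝ) ≤ B / r := div_nonneg hB hr.le
  have hx₀0 : 0 ≤ x₀ := Real.rpow_nonneg hbr _
  refine ⟨B * x₀, mul_nonneg hB hx₀0, fun x hx => ?_⟩
  rcases le_total x x₀ with h | h
  · have h1 : B * x ≤ B * x₀ := mul_le_mul_of_nonneg_left h hB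
    have h2 : 0 ≤ r * x ^ p := mul_nonneg hr.le (Real.rpow_nonneg hx _)
    linarith
  · rcases eq_or_lt_of_le hx with hx0 | hx0
    · rw [← hx0, Real.zero_rpow (by linarith : p ≠ 0)]
      have : 0 ≤ B * x₀ := mul_nonneg hB hx₀0
      simp; linarith
    · have hx₀pow : x₀ ^ (p - 1) = B / r := by
        rw [hx₀, ← Real.rpow_mul hbr, one_div_mul_cancel (by linarith : p - 1 ≠ 0),
          Real.rpow_one]
      have hmono : x₀ ^ (p - 1) ≤ x ^ (p - 1) :=
        Real.rpow_le_rpow hx₀0 h (by linarith)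
      have hBle : B ≤ r * x ^ (p - 1) := by
        rw [hx₀pow] at hmono
        calc B = (B / r) * r := by field_simp
        _ ≤ x ^ (p-1) * r := mul_le_mul_of_nonneg_right hmono hr.le
        _ = r * x ^ (p-1) := mul_comm _ _
      have h2 : B * x ≤ r * x ^ (p - 1) * x := mul_le_mul_of_nonneg_right hBle hx
      have hxp : x ^ (p - 1) * x = x ^ p := by
        rw [show p = (p-1)+1 by ring, Real.rpow_add_one hx0.ne']
        ring_nf
      rw [mul_assoc, hxp] at h2
      have h3 : 0 ≤ B * x₀ := mul_nonneg hB hx₀0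
      linarith

/-- the space `𝒜_s'(ℂ^d)`, `0 < s < 1/2`, described by coefficient
bounds `|c(α)| ≤ C e^{r|α|^{1/(2s)}}` for every `r > 0`, is closed under the product
of power series. -/
theorem stmt_17 (d : ℕ) (hd : 1 ≤ d) (s : ℝ) (hs : 0 < s) (hs' : s < 1/2)
    (c₁ c₂ : (Fin d → ℕ) → ℂ)
    (h₁ : ∀ r > (0:ℝ), ∃ C > (0:ℝ), ∀ α : Fin d → ℕ,
      ‖c₁ α‖ ≤ C * Real.exp (r * ((msize α : ℝ) ^ ((1:ℝ)/(2*s)))))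
    (h₂ : ∀ r > (0:ℝ), ∃ C > (0:ℝ), ∀ α : Fin d → ℕ,
      ‖c₂ α‖ ≤ C * Real.exp (r * ((msize α : ℝ) ^ ((1:ℝ)/(2*s))))) :
    ∀ r > (0:ℝ), ∃ C' > (0:ℝ), ∀ α : Fin d → ℕ,
      ‖prodCoeff c₁ c₂ α‖ ≤
        C' * Real.exp (r * ((msize α : ℝ) ^ ((1:ℝ)/(2*s)))) := by
  intro r hr
  have h2s : 0 < 2 * s := by linarith
  set p : ℝ := (1:ℝ)/(2*s) with hpdef
  have hp1 : 1 < p := by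
    rw [hpdef, lt_div_iff₀ h2s]; linarith
  obtain ⟨C₁, hC₁0, hC₁⟩ := h₁ (r/2) (by linarith)
  obtain ⟨C₂, hC₂0, hC₂⟩ := h₂ (r/2) (by linarith)
  obtain ⟨K, hK0, hK⟩ := absorb ((d:ℝ) + 1) (r/2) p (by positivity) (by linarith) hp1
  refine ⟨C₁ * C₂ * Real.exp K, by positivity, fun α => ?_⟩
  set n : ℕ := msize α with hn
  set M : ℝ := Real.exp (n : ℝ) * (C₁ * C₂ * Real.exp ((r/2) * (n:ℝ) ^ p)) with hM
  have hexp2 : (2:ℝ) ≤ Real.exp 2 := by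
    have := Real.add_one_le_exp (2:ℝ); linarith
  have key : ∀ γ ∈ Finset.Iic α,
      ‖((Real.sqrt ((mchoose α γ : ℕ)) : ℝ) : ℂ) * c₁ γ * c₂ (α - γ)‖ ≤ M := by
    intro γ hγ
    have hγle : γ ≤ α := Finset.mem_Iic.1 hγ
    have hs1 : Real.sqrt ((mchoose α γ : ℕ)) ≤ Real.exp (n:ℝ) := by
      have h1 : ((mchoose α γ : ℕ):ℝ) ≤ Real.exp (n:ℝ) ^ 2 := by
        calc ((mchoose α γ : ℕ):ℝ) ≤ (2:ℝ) ^ n := by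
              exact_mod_cast mchoose_le_two_pow α γ
        _ ≤ Real.exp 2 ^ n := pow_le_pow_left₀ (by norm_num) hexp2 n
        _ = Real.exp (n:ℝ) ^ 2 := by
              rw [← Real.exp_nat_mul, ← Real.exp_nat_mul]; ring_nf
      calc Real.sqrt ((mchoose α γ : ℕ)) ≤ Real.sqrt (Real.exp (n:ℝ) ^ 2) :=
            Real.sqrt_le_sqrt h1
      _ = Real.exp (n:ℝ) := Real.sqrt_sq (Real.exp_nonneg _)
    have hsum : ((msize γ:ℕ):ℝ) ^ p + ((msize (α-γ):ℕ):ℝ) ^ p ≤ (n:ℝ) ^ p := by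
      have hxy : ((msize γ:ℕ):ℝ) + ((msize (α-γ):ℕ):ℝ) = (n:ℝ) := by
        rw [hn]; exact_mod_cast msize_add_msize_sub hγle
      calc ((msize γ:ℕ):ℝ) ^ p + ((msize (α-γ):ℕ):ℝ) ^ p
          ≤ (((msize γ:ℕ):ℝ) + ((msize (α-γ):ℕ):ℝ)) ^ p :=
            rpow_add_rpow_le_rpow_real (by positivity) (by positivity) hp1.le
        _ = (n:ℝ) ^ p := by rw [hxy]
    calc ‖((Real.sqrt ((mchoose α γ : ℕ)) : ℝ) : ℂ) * c₁ γ * c₂ (α - γ)‖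
        = Real.sqrt ((mchoose α γ : ℕ)) * (‖c₁ γ‖ * ‖c₂ (α-γ)‖) := by
          rw [norm_mul, norm_mul, Complex.norm_real, Real.norm_eq_abs,
            abs_of_nonneg (Real.sqrt_nonneg _), mul_assoc]
      _ ≤ Real.exp (n:ℝ) * ((C₁ * Real.exp ((r/2) * ((msize γ:ℕ):ℝ) ^ p))
            * (C₂ * Real.exp ((r/2) * ((msize (α-γ):ℕ):ℝ) ^ p))) := by
          have h1 := hC₁ γ
          have h2 := hC₂ (α - γ)
          gcongr
      _ = C₁ * C₂ * Real.exp ((r/2) * (((msize γ:ℕ):ℝ) ^ p + ((msize (α-γ):ℕ):ℝ) ^ p))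
            * Real.exp (n:ℝ) := by
          rw [mul_add, Real.exp_add]; ring
      _ ≤ C₁ * C₂ * Real.exp ((r/2) * (n:ℝ) ^ p) * Real.exp (n:ℝ) := by
          gcongr
      _ = M := by rw [hM]; ring
  have habs : ‖prodCoeff c₁ c₂ α‖ ≤ (Finset.Iic α).card • M := by
    unfold prodCoeff
    calc ‖∑ γ ∈ Finset.Iic α,
          ((Real.sqrt ((mchoose α γ : ℕ)) : ℝ) : ℂ) * c₁ γ * c₂ (α - γ)‖
        ≤ ∑ γ ∈ Finset.Iic α, ‖
          ((Real.sqrt ((mchoose α γ : ℕ)) : ℝ) : ℂ) * c₁ γ * c₂ (α - γ)‖ :=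
          norm_sum_le _ _
      _ ≤ (Finset.Iic α).card • M := Finset.sum_le_card_nsmul _ _ _ key
  have hcardn : (Finset.Iic α).card ≤ (n+1)^d := by
    rw [Pi.card_Iic]
    simp only [Nat.card_Iic]
    calc ∏ i, (α i + 1) ≤ ∏ _i : Fin d, (n+1) := by
          refine Finset.prod_le_prod' fun i _ => ?_
          have : α i ≤ n := by
            rw [hn]; exact Finset.single_le_sum (fun _ _ => Nat.zero_le _) (Finset.mem_univ i)
          omega
      _ = (n+1)^d := by simp [Finset.prod_const]
  have hMnn : 0 ≤ M := by positivity
  have hcard : ((Finset.Iic α).card : ℝ) * M ≤ Real.exp ((d:ℝ) * n) * M := by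
    refine mul_le_mul_of_nonneg_right ?_ hMnn
    calc ((Finset.Iic α).card : ℝ) ≤ ((n:ℝ)+1)^d := by exact_mod_cast hcardn
    _ ≤ Real.exp (n:ℝ) ^ d := pow_le_pow_left₀ (by positivity) (Real.add_one_le_exp _) d
    _ = Real.exp ((d:ℝ) * n) := (Real.exp_nat_mul _ _).symm
  have hfin : Real.exp ((d:ℝ) * n) * M ≤
      C₁ * C₂ * Real.exp K * Real.exp (r * (n:ℝ) ^ p) := by
    rw [hM]
    have hKn := hK (n:ℝ) (Nat.cast_nonneg n)
    calc Real.exp ((d:ℝ) * n) * (Real.exp (n:ℝ) * (C₁ * C₂ * Real.exp ((r/2) * (n:ℝ) ^ p)))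
        = C₁ * C₂ * (Real.exp (((d:ℝ)+1) * n) * Real.exp ((r/2) * (n:ℝ) ^ p)) := by
          rw [show ((d:ℝ)+1) * n = (d:ℝ) * n + n by ring, Real.exp_add]; ring
      _ ≤ C₁ * C₂ * (Real.exp ((r/2) * (n:ℝ)^p + K) * Real.exp ((r/2) * (n:ℝ) ^ p)) := by
          gcongr
      _ = C₁ * C₂ * Real.exp K * Real.exp (r * (n:ℝ) ^ p) := by
          have hE : Real.exp ((r/2) * (n:ℝ)^p + K) * Real.exp ((r/2) * (n:ℝ) ^ p)
              = Real.exp K * Real.exp (r * (n:ℝ) ^ p) := by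
            rw [← Real.exp_add, ← Real.exp_add]; congr 1; ring
          rw [hE]; ring
  calc ‖prodCoeff c₁ c₂ α‖ ≤ ((Finset.Iic α).card : ℝ) * M := by
        rw [← nsmul_eq_mul]; exact habs
    _ ≤ Real.exp ((d:ℝ) * n) * M := hcard
    _ ≤ C₁ * C₂ * Real.exp K * Real.exp (r * (n:ℝ) ^ p) := hfin

end
end
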